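/- arXiv:1803.03833 — 3 statements merged into one kernel-verified Lean document; each statement's English description precedes it below -/
import Mathlib

section
/- Let G = (V, E, w, μ) be a submodular hypergraph and p > 1. Then the second variational eigenvalue of △_p satisfies λ₂^{(p)} = inf over nonconstant x ∈ ℝ^N of 𝓡_p(x) = Q_p(x)/Z_{p,μ}(x). -/
open scoped BigOperators
open Finset

noncomputable section

/-- A set function on the ground set `Fin N` is submodular:
`F(S ∪ T) + F(S ∩ T) ≤ F(S) + F(T)` for all `S, T`. -/
def Submodular {N : ℕ} (F : Finset (Fin N) → ℝ) : Prop :=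
  ∀ S T : Finset (Fin N), F (S ∪ T) + F (S ∩ T) ≤ F S + F T

/-- The Lovász extension of a set function, written in its (tie-breaking independent)
level-set integral form, which agrees with the usual sorted-sum definition
`f(x) = Σ_{j=1}^{N-1} F({i_1,…,i_j})(x_{i_j} − x_{i_{j+1}})` for a nonincreasing
ordering `x_{i_1} ≥ … ≥ x_{i_N}`. -/
def lovasz {N : ℕ} (F : Finset (Fin N) → ℝ) (x : Fin N → ℝ) : ℝ :=
  ∫ t in (⨅ v, x v)..(⨆ v, x v), F (Finset.univ.filter fun v => t < x v)

/-- The inner product `⟨y, x⟩ = Σ_v y_v x_v`. -/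
def dotp {N : ℕ} (y x : Fin N → ℝ) : ℝ := ∑ v, y v * x v

/-- The set of subgradients of `f : ℝ^N → ℝ` at `x`. -/
def subgradients {N : ℕ} (f : (Fin N → ℝ) → ℝ) (x : Fin N → ℝ) : Set (Fin N → ℝ) :=
  {y | ∀ x', dotp y (x' - x) ≤ f x' - f x}

/-- The base polytope of a set function: `y(S) ≤ F(S)` for all `S ⊆ V` and `y(V) = 0`. -/
def basePolytope {N : ℕ} (F : Finset (Fin N) → ℝ) : Set (Fin N → ℝ) :=
  {y | (∀ S : Finset (Fin N), ∑ v ∈ S, y v ≤ F S) ∧ ∑ v, y v = 0}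

/-- The sign function (`sgn 0 = 0`). -/
def sgn (a : ℝ) : ℝ := if 0 < a then 1 else if a < 0 then -1 else 0

/-- A vector is nonconstant. -/
def Nonconstant {N : ℕ} (x : Fin N → ℝ) : Prop := ∃ u v, x u ≠ x v

/-- Restriction of a vector to a subset of vertices (zero outside that subset). -/
def restrictVec {N : ℕ} (x : Fin N → ℝ) (C : Finset (Fin N)) : Fin N → ℝ :=
  fun v => if v ∈ C then x v else 0

/-- Euclidean norm on `ℝ^N`. -/
def l2norm {N : ℕ} (z : Fin N → ℝ) : ℝ := Real.sqrt (∑ v, z v ^ 2)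

/-- Supremum norm on `ℝ^N`. -/
def linfNorm {N : ℕ} (z : Fin N → ℝ) : ℝ := ⨆ v, |z v|

/-- A submodular hypergraph `G = (V, E, w, μ)` on `V = Fin N`: hyperedges `E`,
positive vertex weights `μ`, and for each hyperedge `e ∈ E` a scalar `θ_e > 0`
together with a normalized symmetric submodular weight `w_e : 2^e → [0,1]`
(extended to all of `2^V` by `w_e(S) = w_e(S ∩ e)`). -/
structure SubmodularHypergraph (N : ℕ) where
  E : Finset (Finset (Fin N))
  μ : Fin N → ℝ
  μ_pos : ∀ v, 0 < μ v
  θ : Finset (Fin N) → ℝ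
  θ_pos : ∀ e ∈ E, 0 < θ e
  w : Finset (Fin N) → Finset (Fin N) → ℝ
  w_inter : ∀ e ∈ E, ∀ S, w e S = w e (S ∩ e)
  w_submodular : ∀ e ∈ E, Submodular (w e)
  w_nonneg : ∀ e ∈ E, ∀ S, 0 ≤ w e S
  w_le_one : ∀ e ∈ E, ∀ S, w e S ≤ 1
  w_empty : ∀ e ∈ E, w e ∅ = 0
  w_normalized : ∀ e ∈ E, ∃ S ⊆ e, w e S = 1
  w_symm : ∀ e ∈ E, ∀ S ⊆ e, w e S = w e (e \ S)

namespace SubmodularHypergraph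

variable {N : ℕ} (G : SubmodularHypergraph N)

/-- `vol(S) = Σ_{v ∈ S} μ_v`. -/
def vol (S : Finset (Fin N)) : ℝ := ∑ v ∈ S, G.μ v

/-- `vol(∂S) = Σ_{e ∈ E} θ_e w_e(S)`. -/
def volB (S : Finset (Fin N)) : ℝ := ∑ e ∈ G.E, G.θ e * G.w e S

/-- The Lovász extension `f_e` of the hyperedge weight `w_e`. -/
def fe (e : Finset (Fin N)) (x : Fin N → ℝ) : ℝ := lovasz (G.w e) x

/-- `Q_p(x) = Σ_{e ∈ E} θ_e f_e(x)^p`. -/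
def Q (p : ℝ) (x : Fin N → ℝ) : ℝ := ∑ e ∈ G.E, G.θ e * G.fe e x ^ p

/-- `‖x‖_{ℓp,μ}^p = Σ_v μ_v |x_v|^p`. -/
def normLpPow (p : ℝ) (x : Fin N → ℝ) : ℝ := ∑ v, G.μ v * |x v| ^ p

/-- `G` is connected: `vol(∂S) > 0` for all nonempty proper `S ⊂ V`. -/
def Connected : Prop :=
  ∀ S : Finset (Fin N), S.Nonempty → S ≠ Finset.univ → 0 < G.volB S

/-- Vertices `u, v` are connected in `G`: every `S` with `u ∈ S`, `v ∉ S` has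
`vol(∂S) > 0`. -/
def VertConnected (u v : Fin N) : Prop :=
  ∀ S : Finset (Fin N), u ∈ S → v ∉ S → 0 < G.volB S

/-- The conductance `c(S) = vol(∂S) / min{vol(S), vol(V∖S)}`. -/
def conductance (S : Finset (Fin N)) : ℝ := G.volB S / min (G.vol S) (G.vol Sᶜ)

/-- The degree `d_v = Σ_{e ∈ E : v ∈ e} θ_e`. -/
def degree (v : Fin N) : ℝ := ∑ e ∈ G.E.filter (fun e => v ∈ e), G.θ e

/-- `τ = max_v d_v / μ_v`. -/
def tau : ℝ := ⨆ v, G.degree v / G.μ v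

/-- `G` is homogeneous: `w_e(S) = 1` for every `S ∈ 2^e ∖ {∅, e}`. -/
def Homogeneous : Prop :=
  ∀ e ∈ G.E, ∀ S ⊆ e, S ≠ ∅ → S ≠ e → G.w e S = 1

/-- `(λ, x)` is an eigenpair of the `p`-Laplacian `△_p` (for `p > 1` and for `p = 1`). -/
def IsEigenpair (p lam : ℝ) (x : Fin N → ℝ) : Prop :=
  x ≠ 0 ∧
  ∃ y : Finset (Fin N) → Fin N → ℝ,
    (∀ e ∈ G.E, y e ∈ basePolytope (G.w e) ∧
        ∀ z ∈ basePolytope (G.w e), dotp z x ≤ dotp (y e) x) ∧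
    (if 1 < p then
        ∀ v, ∑ e ∈ G.E, G.θ e * G.fe e x ^ (p - 1) * y e v
              = lam * G.μ v * (|x v| ^ (p - 1) * sgn (x v))
      else
        (∀ v, x v ≠ 0 → ∑ e ∈ G.E, G.θ e * y e v = lam * G.μ v * sgn (x v)) ∧
        (∀ v, x v = 0 → |∑ e ∈ G.E, G.θ e * y e v| ≤ lam * G.μ v))

/-- Vertices `u, v` are connected inside the induced sub-hypergraph `G[W]`
(the boundary volume in `G[W]` of `S ⊆ W` equals `Σ_{e ∈ E} θ_e w_e(S)`). -/
def VertConnectedIn (W : Finset (Fin N)) (u v : Fin N) : Prop :=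
  u = v ∨ ∀ S ⊆ W, u ∈ S → v ∉ S → 0 < G.volB S

/-- `C` is (the vertex set of) a connected component of the induced sub-hypergraph `G[W]`. -/
def IsComponent (W C : Finset (Fin N)) : Prop :=
  C ⊆ W ∧ C.Nonempty ∧
    (∀ u ∈ C, ∀ v ∈ C, G.VertConnectedIn W u v) ∧
    (∀ u ∈ C, ∀ v ∈ W, G.VertConnectedIn W u v → v ∈ C)

end SubmodularHypergraph

def posSupp {N : ℕ} (x : Fin N → ℝ) : Finset (Fin N) := Finset.univ.filter fun v => 0 < x v
def negSupp {N : ℕ} (x : Fin N → ℝ) : Finset (Fin N) := Finset.univ.filter fun v => x v < 0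
def nonnegSupp {N : ℕ} (x : Fin N → ℝ) : Finset (Fin N) := Finset.univ.filter fun v => 0 ≤ x v
def nonposSupp {N : ℕ} (x : Fin N → ℝ) : Finset (Fin N) := Finset.univ.filter fun v => x v ≤ 0

namespace SubmodularHypergraph

variable {N : ℕ} (G : SubmodularHypergraph N)

/-- The number of strong nodal domains of `x` (positive ones plus negative ones). -/
def strongNodalCount (x : Fin N → ℝ) : ℕ :=
  {C : Finset (Fin N) | G.IsComponent (posSupp x) C}.ncard +
  {C : Finset (Fin N) | G.IsComponent (negSupp x) C}.ncard

/-- The number of weak nodal domains of `x` (positive ones plus negative ones). -/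
def weakNodalCount (x : Fin N → ℝ) : ℕ :=
  {C : Finset (Fin N) | G.IsComponent (nonnegSupp x) C}.ncard +
  {C : Finset (Fin N) | G.IsComponent (nonposSupp x) C}.ncard

/-- The collection of strong nodal domains of `x`. -/
def strongNodalDomains (x : Fin N → ℝ) : Set (Finset (Fin N)) :=
  {C | G.IsComponent (posSupp x) C ∨ G.IsComponent (negSupp x) C}

/-- The collection of weak nodal domains of `x`. -/
def weakNodalDomains (x : Fin N → ℝ) : Set (Finset (Fin N)) :=
  {C | G.IsComponent (nonnegSupp x) C ∨ G.IsComponent (nonposSupp x) C}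

/-- `Z_{p,μ}(x) = min_c ‖x − c·𝟙‖_{ℓp,μ}^p`. -/
def Z (p : ℝ) (x : Fin N → ℝ) : ℝ := ⨅ c : ℝ, ∑ v, G.μ v * |x v - c| ^ p

/-- `𝓡_p(x) = Q_p(x) / Z_{p,μ}(x)`. -/
def Rq (p : ℝ) (x : Fin N → ℝ) : ℝ := G.Q p x / G.Z p x

/-- The `k`-way Cheeger constant `h_k`. -/
def cheegerConst (k : ℕ) : ℝ :=
  sInf {c : ℝ | ∃ S : Fin k → Finset (Fin N),
    (∀ i, (S i).Nonempty) ∧ (∀ i j, i ≠ j → Disjoint (S i) (S j)) ∧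
    c = ⨆ i, G.conductance (S i)}

end SubmodularHypergraph

/-- There is an odd continuous map `h : A → ℝ^k ∖ {0}`. -/
def genusLE {N : ℕ} (A : Set (Fin N → ℝ)) (k : ℕ) : Prop :=
  ∃ h : (Fin N → ℝ) → (Fin k → ℝ),
    ContinuousOn h A ∧ (∀ x ∈ A, h (-x) = -h x) ∧ ∀ x ∈ A, h x ≠ 0

/-- The Krasnoselski genus of a set. -/
def genus {N : ℕ} (A : Set (Fin N → ℝ)) : ℕ∞ :=
  sInf ((fun n : ℕ => (n : ℕ∞)) '' {n | genusLE A n})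

namespace SubmodularHypergraph

variable {N : ℕ} (G : SubmodularHypergraph N)

/-- The `k`-th variational eigenvalue `λ_k^{(p)}` of `△_p`:
`min` over closed symmetric `A ⊆ S_{p,μ}` with `γ(A) ≥ k` of `max_{x ∈ A} Q_p(x)`. -/
def varEigen (p : ℝ) (k : ℕ) : ℝ :=
  sInf ((fun A : Set (Fin N → ℝ) => sSup (G.Q p '' A)) ''
    {A | IsClosed A ∧ (∀ x ∈ A, -x ∈ A) ∧
         A ⊆ {x | G.normLpPow p x = 1} ∧ (k : ℕ∞) ≤ genus A})

end SubmodularHypergraph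


set_option linter.unusedSectionVars false


lemma sgn_of_pos {a : ℝ} (h : 0 < a) : sgn a = 1 := by unfold sgn; simp [h]
lemma sgn_of_neg {a : ℝ} (h : a < 0) : sgn a = -1 := by
  unfold sgn; simp [h, not_lt.mpr h.le]
lemma sgn_zero : sgn 0 = 0 := by unfold sgn; simp

lemma sgn_neg' (a : ℝ) : sgn (-a) = - sgn a := by
  rcases lt_trichotomy a 0 with h|h|h
  · rw [sgn_of_neg h, sgn_of_pos (by linarith)]; norm_num
  · subst h; rw [neg_zero, sgn_zero]; ring
  · rw [sgn_of_pos h, sgn_of_neg (by linarith)]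

lemma rpow_tangent_core {p : ℝ} (hp : 1 < p) {t u : ℝ} (ht : 0 ≤ t) (hu : 0 ≤ u) :
    t ^ p + p * t ^ (p - 1) * (u - t) ≤ u ^ p := by
  rcases eq_or_lt_of_le ht with h0 | h0
  · rw [← h0]
    rw [Real.zero_rpow (by positivity), Real.zero_rpow (by linarith)]
    simpa using Real.rpow_nonneg hu p
  · set s : ℝ := (u - t) / t with hs
    have hs1 : -1 ≤ s := by
      rw [hs, le_div_iff₀ h0]; linarith
    have hb := one_add_mul_self_le_rpow_one_add hs1 hp.le
    have h1s : 1 + s = u / t := by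
        rw [hs, eq_div_iff h0.ne', add_mul, div_mul_cancel₀ _ h0.ne']; ring
    have hmul : t ^ p * (1 + p * s) ≤ t ^ p * (1 + s) ^ p :=
      mul_le_mul_of_nonneg_left hb (Real.rpow_nonneg h0.le p)
    have hrt : t ^ p * (1 + s) ^ p = u ^ p := by
      rw [← Real.mul_rpow h0.le (by rw [h1s]; positivity), h1s]
      field_simp
    have hts : t ^ p * s = t ^ (p - 1) * (u - t) := by
      have htp : t ^ p = t ^ (p - 1) * t := by
        rw [← Real.rpow_add_one h0.ne' (p-1)]; ring_nf
      rw [htp, hs]; field_simp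
    calc t ^ p + p * t ^ (p - 1) * (u - t) = t ^ p * (1 + p * s) := by
          linear_combination (-p) * hts
    _ ≤ t ^ p * (1 + s) ^ p := hmul
    _ = u ^ p := hrt

lemma rpow_tangent {p : ℝ} (hp : 1 < p) (a c : ℝ) :
    |a| ^ p - p * (|a| ^ (p - 1) * sgn a) * c ≤ |a - c| ^ p := by
  rcases lt_trichotomy a 0 with ha | ha | ha
  · rw [sgn_of_neg ha, abs_of_neg ha]
    have hcore := rpow_tangent_core hp (t := -a) (u := |a - c|) (by linarith) (abs_nonneg _)
    have h1 : c - a ≤ |a - c| := by rw [abs_sub_comm]; exact le_abs_self _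
    have h2 : p * (-a) ^ (p-1) * c ≤ p * (-a) ^ (p-1) * (|a - c| - -a) := by
      apply mul_le_mul_of_nonneg_left (by linarith)
        (mul_nonneg (by linarith) (Real.rpow_nonneg (by linarith) _))
    linarith
  · subst ha
    rw [sgn_zero, abs_zero, Real.zero_rpow (show p ≠ 0 by positivity)]
    simp; positivity
  · rw [sgn_of_pos ha, abs_of_pos ha]
    have hcore := rpow_tangent_core hp (t := a) (u := |a - c|) ha.le (abs_nonneg _)
    have h1 : a - c ≤ |a - c| := le_abs_self _
    have h2 : p * a ^ (p-1) * (-c) ≤ p * a ^ (p-1) * (|a - c| - a) := by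
      apply mul_le_mul_of_nonneg_left (by linarith) (by positivity)
    linarith

lemma phi_cont {q : ℝ} (hq : 0 < q) : Continuous fun t : ℝ => |t| ^ q * sgn t := by
  have heq : (fun t : ℝ => |t| ^ q * sgn t)
      = fun t => (max t 0) ^ q - (max (-t) 0) ^ q := by
    funext t
    rcases lt_trichotomy t 0 with h|h|h
    · rw [sgn_of_neg h, abs_of_neg h, max_eq_right h.le, max_eq_left (by linarith), Real.zero_rpow hq.ne']
      ring
    · subst h; rw [sgn_zero]; simp [Real.zero_rpow hq.ne']
    · rw [sgn_of_pos h, abs_of_pos h, max_eq_left h.le, max_eq_right (by linarith), Real.zero_rpow hq.ne']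
      ring
  rw [heq]
  exact ((Real.continuous_rpow_const hq.le).comp (continuous_id.max continuous_const)).sub
    ((Real.continuous_rpow_const hq.le).comp (continuous_neg.max continuous_const))


section infsup
variable {N : ℕ} [Nonempty (Fin N)] (x : Fin N → ℝ) (c : ℝ)

lemma bddB (f : Fin N → ℝ) : BddBelow (Set.range f) := (Set.finite_range f).bddBelow
lemma bddA (f : Fin N → ℝ) : BddAbove (Set.range f) := (Set.finite_range f).bddAbove

lemma iInf_sub_const : (⨅ v, (x v - c)) = (⨅ v, x v) - c := by
  apply le_antisymm
  · have h : ∀ v, (⨅ v, (x v - c)) ≤ x v - c := fun v => ciInf_le (bddB _) v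
    have h2 : (⨅ v, (x v - c)) + c ≤ ⨅ v, x v := le_ciInf fun v => by linarith [h v]
    linarith
  · exact le_ciInf fun v => by linarith [ciInf_le (bddB x) v]

lemma iSup_add_const : (⨆ v, (x v + c)) = (⨆ v, x v) + c := by
  apply le_antisymm
  · exact ciSup_le fun v => by linarith [le_ciSup (bddA x) v]
  · have h : ∀ v, x v + c ≤ ⨆ v, (x v + c) := fun v =>
      le_ciSup (bddA (fun v => x v + c)) v
    have h2 : (⨆ v, x v) ≤ (⨆ v, (x v + c)) - c := ciSup_le fun v => by linarith [h v]
    linarith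

lemma iSup_sub_const : (⨆ v, (x v - c)) = (⨆ v, x v) - c := by
  have := iSup_add_const x (-c); simp only [← sub_eq_add_neg] at this; exact this

lemma iInf_neg_eq : (⨅ v, (- x v)) = - (⨆ v, x v) := by
  apply le_antisymm
  · have h2 : (⨆ v, x v) ≤ - ⨅ v, (- x v) :=
      ciSup_le fun v => by linarith [ciInf_le (bddB (fun v => - x v)) v]
    linarith
  · exact le_ciInf fun v => by linarith [le_ciSup (bddA x) v]

lemma iSup_neg_eq : (⨆ v, (- x v)) = - (⨅ v, x v) := by
  have := iInf_neg_eq (fun v => - x v); simp only [neg_neg] at this; linarith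

lemma iInf_mul_left {t : ℝ} (ht : 0 ≤ t) : (⨅ v, t * x v) = t * ⨅ v, x v := by
  rcases eq_or_lt_of_le ht with h0 | h0
  · simp [← h0, ciInf_const]
  · apply le_antisymm
    · have h : ∀ v, (⨅ v, t * x v) / t ≤ x v := fun v => by
        rw [div_le_iff₀ h0, mul_comm]; exact ciInf_le (bddB _) v
      have := le_ciInf h
      rw [div_le_iff₀ h0, mul_comm] at this; exact this
    · exact le_ciInf fun v => mul_le_mul_of_nonneg_left (ciInf_le (bddB x) v) ht

lemma iSup_mul_left {t : ℝ} (ht : 0 ≤ t) : (⨆ v, t * x v) = t * ⨆ v, x v := by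
  rcases eq_or_lt_of_le ht with h0 | h0
  · simp [← h0, ciSup_const]
  · apply le_antisymm
    · exact ciSup_le fun v => mul_le_mul_of_nonneg_left (le_ciSup (bddA x) v) ht
    · have h : ∀ v, x v ≤ (⨆ v, t * x v) / t := fun v => by
        rw [le_div_iff₀ h0, mul_comm]; exact le_ciSup (bddA (fun v => t * x v)) v
      have h2 := ciSup_le h
      rw [le_div_iff₀ h0, mul_comm] at h2; exact h2

end infsup

section lov
variable {N : ℕ} (F : Finset (Fin N) → ℝ) (x : Fin N → ℝ)

lemma lovasz_of_empty (hN : ¬ Nonempty (Fin N)) : lovasz F x = 0 := by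
  unfold lovasz
  have : IsEmpty (Fin N) := not_nonempty_iff.mp hN
  rw [Real.iInf_of_isEmpty, Real.iSup_of_isEmpty]
  simp

lemma lovasz_nonneg (hF : ∀ S, 0 ≤ F S) : 0 ≤ lovasz F x := by
  by_cases hN : Nonempty (Fin N)
  · exact intervalIntegral.integral_nonneg
      (le_trans (ciInf_le (bddB x) (Classical.arbitrary _)) (le_ciSup (bddA x) (Classical.arbitrary _))) (fun u _ => hF _)
  · rw [lovasz_of_empty F x hN]

lemma lovasz_le (hF0 : ∀ S, 0 ≤ F S) (hF1 : ∀ S, F S ≤ 1) :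
    lovasz F x ≤ (⨆ v, x v) - (⨅ v, x v) := by
  by_cases hN : Nonempty (Fin N)
  · have hle : (⨅ v, x v) ≤ (⨆ v, x v) := le_trans (ciInf_le (bddB x) (Classical.arbitrary _)) (le_ciSup (bddA x) (Classical.arbitrary _))
    have := intervalIntegral.norm_integral_le_of_norm_le_const
      (C := 1) (a := ⨅ v, x v) (b := ⨆ v, x v)
      (f := fun t => F (Finset.univ.filter fun v => t < x v))
      (fun u _ => by rw [Real.norm_eq_abs, abs_of_nonneg (hF0 _)]; exact hF1 _)
    unfold lovasz
    calc (∫ t in (⨅ v, x v)..(⨆ v, x v), F (Finset.univ.filter fun v => t < x v))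
        ≤ ‖∫ t in (⨅ v, x v)..(⨆ v, x v), F (Finset.univ.filter fun v => t < x v)‖ :=
          le_abs_self _
      _ ≤ 1 * |(⨆ v, x v) - (⨅ v, x v)| := this
      _ = (⨆ v, x v) - (⨅ v, x v) := by rw [one_mul, abs_of_nonneg (by linarith)]
  · rw [lovasz_of_empty F x hN]
    have : IsEmpty (Fin N) := not_nonempty_iff.mp hN
    rw [Real.iInf_of_isEmpty, Real.iSup_of_isEmpty]
    simp

lemma lovasz_sub_const (c : ℝ) : lovasz F (fun v => x v - c) = lovasz F x := by
  by_cases hN : Nonempty (Fin N)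
  · unfold lovasz
    rw [iInf_sub_const, iSup_sub_const]
    have hint : ∀ t : ℝ, (Finset.univ.filter fun v => t < x v - c)
        = (Finset.univ.filter fun v => t + c < x v) := by
      intro t; apply Finset.filter_congr; intro v _
      simp [lt_sub_iff_add_lt]
    simp only [hint]
    rw [intervalIntegral.integral_comp_add_right
      (fun t => F (Finset.univ.filter fun v => t < x v)) c]
    norm_num
  · rw [lovasz_of_empty F _ hN, lovasz_of_empty F _ hN]

lemma lovasz_smul {t : ℝ} (ht : 0 ≤ t) :
    lovasz F (fun v => t * x v) = t * lovasz F x := by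
  by_cases hN : Nonempty (Fin N)
  swap
  · rw [lovasz_of_empty F _ hN, lovasz_of_empty F _ hN, mul_zero]
  rcases eq_or_lt_of_le ht with h0 | h0
  · rw [← h0]
    unfold lovasz
    simp only [zero_mul, ciInf_const, ciSup_const, intervalIntegral.integral_same]
  · unfold lovasz
    rw [iInf_mul_left x ht, iSup_mul_left x ht]
    have hint : ∀ u : ℝ, (Finset.univ.filter fun v => u < t * x v)
        = (Finset.univ.filter fun v => u / t < x v) := by
      intro u; apply Finset.filter_congr; intro v _
      simp [div_lt_iff₀ h0, mul_comm]
    simp only [hint]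
    rw [intervalIntegral.integral_comp_div
      (c := t) (fun u => F (Finset.univ.filter fun v => u < x v)) h0.ne']
    rw [mul_comm t (⨅ v, x v), mul_comm t (⨆ v, x v),
      mul_div_assoc, div_self h0.ne', mul_div_assoc, div_self h0.ne']
    simp [smul_eq_mul]

lemma lovasz_const (b : ℝ) : lovasz F (fun _ => b) = 0 := by
  by_cases hN : Nonempty (Fin N)
  · unfold lovasz
    rw [ciInf_const, ciSup_const, intervalIntegral.integral_same]
  · exact lovasz_of_empty F _ hN

lemma lovasz_neg (hcompl : ∀ S, F (Finset.univ \ S) = F S) :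
    lovasz F (fun v => - x v) = lovasz F x := by
  by_cases hN : Nonempty (Fin N)
  swap
  · rw [lovasz_of_empty F _ hN, lovasz_of_empty F _ hN]
  unfold lovasz
  rw [iInf_neg_eq, iSup_neg_eq]
  have hint : ∀ t : ℝ, (Finset.univ.filter fun v => t < - x v)
      = (Finset.univ.filter fun v => x v < - t) := by
    intro t; apply Finset.filter_congr; intro v _
    constructor <;> intro h <;> simp at * <;> linarith
  simp only [hint]
  rw [show (fun t => F (Finset.univ.filter fun v => x v < - t))
      = (fun t => (fun u => F (Finset.univ.filter fun v => x v < u)) (-t)) from rfl]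
  rw [intervalIntegral.integral_comp_neg (fun u => F (Finset.univ.filter fun v => x v < u))]
  rw [neg_neg, neg_neg]
  apply intervalIntegral.integral_congr_ae
  have hfin : ∀ᵐ u : ℝ, u ∉ Set.range x :=
    (Set.finite_range x).countable.ae_notMem _
  filter_upwards [hfin] with u hu _
  have : (Finset.univ.filter fun v => x v < u)
      = Finset.univ \ (Finset.univ.filter fun v => u < x v) := by
    ext v
    simp only [Finset.mem_filter, Finset.mem_sdiff, Finset.mem_univ, true_and]
    constructor
    · intro h; exact fun h2 => absurd (lt_trans h h2) (lt_irrefl _)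
    · intro h
      rcases lt_trichotomy (x v) u with h1|h1|h1
      · exact h1
      · exact absurd ⟨v, h1⟩ hu
      · exact absurd h1 h
  rw [this, hcompl]

end lov

section hyper

variable {N : ℕ} (G : SubmodularHypergraph N) {p : ℝ} (hp : 1 < p)

lemma w_compl {e : Finset (Fin N)} (he : e ∈ G.E) (S : Finset (Fin N)) :
    G.w e (Finset.univ \ S) = G.w e S := by
  rw [G.w_inter e he (Finset.univ \ S), G.w_inter e he S]
  have h1 : (Finset.univ \ S) ∩ e = e \ (S ∩ e) := by
    ext v; simp [Finset.mem_sdiff, Finset.mem_inter]; tauto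
  rw [h1, ← G.w_symm e he (S ∩ e) Finset.inter_subset_right]

lemma fe_nonneg {e : Finset (Fin N)} (he : e ∈ G.E) (x : Fin N → ℝ) : 0 ≤ G.fe e x :=
  lovasz_nonneg _ _ (G.w_nonneg e he)

lemma fe_sub_const (e : Finset (Fin N)) (x : Fin N → ℝ) (c : ℝ) :
    G.fe e (fun v => x v - c) = G.fe e x := lovasz_sub_const _ _ _

lemma fe_smul (e : Finset (Fin N)) (x : Fin N → ℝ) {t : ℝ} (ht : 0 ≤ t) :
    G.fe e (fun v => t * x v) = t * G.fe e x := lovasz_smul _ _ ht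

lemma fe_neg {e : Finset (Fin N)} (he : e ∈ G.E) (x : Fin N → ℝ) :
    G.fe e (fun v => - x v) = G.fe e x := lovasz_neg _ _ (w_compl G he)

lemma fe_const (e : Finset (Fin N)) (b : ℝ) : G.fe e (fun _ => b) = 0 := lovasz_const _ _

lemma fe_affine {e : Finset (Fin N)} (he : e ∈ G.E) (x : Fin N → ℝ) (a b : ℝ) :
    G.fe e (fun v => a * x v + b) = |a| * G.fe e x := by
  have h1 : G.fe e (fun v => a * x v + b) = G.fe e (fun v => a * x v) := by
    have := fe_sub_const G e (fun v => a * x v + b) b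
    simp only [add_sub_cancel_right] at this
    exact this.symm
  rcases le_or_gt 0 a with ha | ha
  · rw [h1, fe_smul G e x ha, abs_of_nonneg ha]
  · rw [h1]
    have h2 : (fun v => a * x v) = (fun v => - ((-a) * x v)) := by funext v; ring
    rw [h2, fe_neg G he, fe_smul G e x (by linarith), abs_of_neg ha]

lemma Q_nonneg (x : Fin N → ℝ) : 0 ≤ G.Q p x := by
  apply Finset.sum_nonneg
  intro e he
  exact mul_nonneg (G.θ_pos e he).le (Real.rpow_nonneg (fe_nonneg G he x) p)

lemma Q_affine (x : Fin N → ℝ) (a b : ℝ) :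
    G.Q p (fun v => a * x v + b) = |a| ^ p * G.Q p x := by
  unfold SubmodularHypergraph.Q
  rw [Finset.mul_sum]
  apply Finset.sum_congr rfl
  intro e he
  rw [fe_affine G he x a b, Real.mul_rpow (abs_nonneg a) (fe_nonneg G he x)]
  ring

lemma normLpPow_nonneg (x : Fin N → ℝ) : 0 ≤ G.normLpPow p x :=
  Finset.sum_nonneg fun v _ =>
    mul_nonneg (G.μ_pos v).le (Real.rpow_nonneg (abs_nonneg _) p)

lemma normLpPow_pos {x : Fin N → ℝ} (v0 : Fin N) (hv : x v0 ≠ 0) :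
    0 < G.normLpPow p x := by
  apply Finset.sum_pos' (fun v _ =>
    mul_nonneg (G.μ_pos v).le (Real.rpow_nonneg (abs_nonneg _) p))
  exact ⟨v0, Finset.mem_univ _,
    mul_pos (G.μ_pos v0) (Real.rpow_pos_of_pos (abs_pos.mpr hv) p)⟩

lemma Z_le (x : Fin N → ℝ) (c : ℝ) : G.Z p x ≤ ∑ v, G.μ v * |x v - c| ^ p := by
  apply ciInf_le
  refine ⟨0, ?_⟩
  rintro r ⟨c', rfl⟩
  exact Finset.sum_nonneg fun v _ =>
    mul_nonneg (G.μ_pos v).le (Real.rpow_nonneg (abs_nonneg _) p)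

lemma Z_nonneg (x : Fin N → ℝ) : 0 ≤ G.Z p x :=
  le_ciInf fun c => Finset.sum_nonneg fun v _ =>
    mul_nonneg (G.μ_pos v).le (Real.rpow_nonneg (abs_nonneg _) p)

include hp in
lemma Z_pos {x : Fin N → ℝ} (hx : Nonconstant x) : 0 < G.Z p x := by
  obtain ⟨u, v, huv⟩ := hx
  set d : ℝ := |x u - x v| with hd
  have hd0 : 0 < d := abs_pos.mpr (sub_ne_zero.mpr huv)
  set δ : ℝ := min (G.μ u) (G.μ v) * (d / 2) ^ p with hδ
  have hδ0 : 0 < δ :=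
    mul_pos (lt_min (G.μ_pos u) (G.μ_pos v)) (Real.rpow_pos_of_pos (by linarith) p)
  have hbound : ∀ c : ℝ, δ ≤ ∑ w, G.μ w * |x w - c| ^ p := by
    intro c
    have htri : d ≤ |x u - c| + |x v - c| := by
      have := abs_sub_abs_le_abs_sub (x u - c) (x v - c)
      calc d = |(x u - c) - (x v - c)| := by rw [hd]; ring_nf
        _ ≤ |x u - c| + |x v - c| := abs_sub _ _
    rcases le_total (|x u - c|) (|x v - c|) with hle | hle
    · have h2 : d / 2 ≤ |x v - c| := by linarith
      calc δ ≤ G.μ v * |x v - c| ^ p := by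
            apply mul_le_mul (min_le_right _ _)
              (Real.rpow_le_rpow (by linarith) h2 (by linarith))
              (Real.rpow_nonneg (by linarith) p) (G.μ_pos v).le
        _ ≤ ∑ w, G.μ w * |x w - c| ^ p := Finset.single_le_sum (f := fun w => G.μ w * |x w - c| ^ p)
            (fun w _ => mul_nonneg (G.μ_pos w).le (Real.rpow_nonneg (abs_nonneg _) p))
            (Finset.mem_univ v)
    · have h2 : d / 2 ≤ |x u - c| := by linarith
      calc δ ≤ G.μ u * |x u - c| ^ p := by
            apply mul_le_mul (min_le_left _ _)
              (Real.rpow_le_rpow (by linarith) h2 (by linarith))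
              (Real.rpow_nonneg (by linarith) p) (G.μ_pos u).le
        _ ≤ ∑ w, G.μ w * |x w - c| ^ p := Finset.single_le_sum (f := fun w => G.μ w * |x w - c| ^ p)
            (fun w _ => mul_nonneg (G.μ_pos w).le (Real.rpow_nonneg (abs_nonneg _) p))
            (Finset.mem_univ u)
  exact lt_of_lt_of_le hδ0 (le_ciInf hbound)

include hp in
lemma Z_eq_of_balanced {x : Fin N → ℝ}
    (hbal : ∑ v, G.μ v * (|x v| ^ (p - 1) * sgn (x v)) = 0) :
    G.Z p x = G.normLpPow p x := by
  apply le_antisymm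
  · have := Z_le G (p := p) x 0
    simpa [SubmodularHypergraph.normLpPow] using this
  · apply le_ciInf
    intro c
    have hterm : ∀ v, G.μ v * |x v| ^ p
        - c * (p * (G.μ v * (|x v| ^ (p - 1) * sgn (x v))))
        ≤ G.μ v * |x v - c| ^ p := by
      intro v
      have := rpow_tangent hp (x v) c
      have hμ := (G.μ_pos v).le
      nlinarith [mul_le_mul_of_nonneg_left this hμ]
    have hsum := Finset.sum_le_sum (s := Finset.univ) (fun v _ => hterm v)
    rw [Finset.sum_sub_distrib, ← Finset.mul_sum, ← Finset.mul_sum] at hsum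
    rw [hbal] at hsum
    simpa [SubmodularHypergraph.normLpPow] using hsum

end hyper

def circleSet : Set (ℝ × ℝ) := {q | q.1 ^ 2 + q.2 ^ 2 = 1}

section psi

variable {N : ℕ} (G : SubmodularHypergraph N) (p : ℝ) (x : Fin N → ℝ)

def yMap (q : ℝ × ℝ) : Fin N → ℝ := fun v => q.1 * x v + q.2

def psiMap (q : ℝ × ℝ) : Fin N → ℝ :=
  fun v => (G.normLpPow p (yMap x q)) ^ (-p⁻¹) * (yMap x q v)

variable {G p x}
variable (hp : 1 < p)

lemma yMap_ne_zero (hx : Nonconstant x) {q : ℝ × ℝ} (hq : q ∈ circleSet) :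
    ∃ v, yMap x q v ≠ 0 := by
  obtain ⟨u, v, huv⟩ := hx
  by_contra h
  push_neg at h
  rcases eq_or_ne q.1 0 with h1 | h1
  · have h2 := h u
    simp only [yMap, h1, zero_mul, zero_add] at h2
    rw [circleSet, Set.mem_setOf_eq, h1, h2] at hq
    norm_num at hq
  · have hu := h u
    have hv := h v
    simp only [yMap] at hu hv
    apply huv
    have : q.1 * x u = q.1 * x v := by linarith
    exact mul_left_cancel₀ h1 this

lemma n_pos (hx : Nonconstant x) {q : ℝ × ℝ} (hq : q ∈ circleSet) :
    0 < G.normLpPow p (yMap x q) := by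
  obtain ⟨v, hv⟩ := yMap_ne_zero hx hq
  exact normLpPow_pos G v hv

include hp in
lemma psi_sphere (hx : Nonconstant x) {q : ℝ × ℝ} (hq : q ∈ circleSet) :
    G.normLpPow p (psiMap G p x q) = 1 := by
  have hn := n_pos (G := G) (p := p) hx hq
  set n := G.normLpPow p (yMap x q) with hndef
  have ht : (0:ℝ) ≤ n ^ (-p⁻¹) := Real.rpow_nonneg hn.le _
  have htp : (n ^ (-p⁻¹)) ^ p = n⁻¹ := by
    rw [← Real.rpow_mul hn.le]
    rw [neg_mul, inv_mul_cancel₀ (by positivity : p ≠ 0)]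
    exact Real.rpow_neg_one n
  unfold SubmodularHypergraph.normLpPow psiMap
  have hterm : ∀ v, G.μ v * |n ^ (-p⁻¹) * yMap x q v| ^ p
      = n⁻¹ * (G.μ v * |yMap x q v| ^ p) := by
    intro v
    rw [abs_mul, abs_of_nonneg ht, Real.mul_rpow ht (abs_nonneg _), htp]
    ring
  show ∑ v, G.μ v * |n ^ (-p⁻¹) * yMap x q v| ^ p = 1
  simp only [hterm]
  rw [← Finset.mul_sum]
  have hsum : ∑ v, G.μ v * |yMap x q v| ^ p = n := rfl
  rw [hsum]
  exact inv_mul_cancel₀ hn.ne'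

lemma psi_neg (q : ℝ × ℝ) : psiMap G p x (-q) = - psiMap G p x q := by
  have hy : ∀ v, yMap x (-q) v = - yMap x q v := by
    intro v; simp only [yMap, Prod.fst_neg, Prod.snd_neg]; ring
  have hnorm : G.normLpPow p (yMap x (-q)) = G.normLpPow p (yMap x q) := by
    unfold SubmodularHypergraph.normLpPow
    apply Finset.sum_congr rfl
    intro v _
    rw [hy v, abs_neg]
  funext v
  simp only [psiMap, Pi.neg_apply]
  rw [hy v, hnorm]
  ring

include hp in
lemma n_continuous : Continuous fun q : ℝ × ℝ => G.normLpPow p (yMap x q) := by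
  unfold SubmodularHypergraph.normLpPow
  apply continuous_finset_sum
  intro v _
  apply Continuous.mul continuous_const
  have h1 : Continuous fun q : ℝ × ℝ => |yMap x q v| := by
    apply Continuous.abs
    exact ((continuous_fst.mul continuous_const).add continuous_snd)
  exact (Real.continuous_rpow_const (by linarith)).comp h1

include hp in
lemma psi_continuousOn (hx : Nonconstant x) :
    ContinuousOn (psiMap G p x) circleSet := by
  apply continuousOn_pi.mpr
  intro v
  apply ContinuousOn.mul
  · intro q hq
    apply ContinuousAt.continuousWithinAt
    exact ((n_continuous (G := G) (x := x) hp).continuousAt).rpow_const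
      (Or.inl (n_pos hx hq).ne')
  · exact (((continuous_fst.mul continuous_const).add continuous_snd)).continuousOn

lemma circle_compact : IsCompact circleSet := by
  apply IsCompact.of_isClosed_subset (isCompact_closedBall (0 : ℝ × ℝ) 2)
  · exact isClosed_eq (by continuity) continuous_const
  · intro q hq
    have h := hq
    rw [circleSet, Set.mem_setOf_eq] at h
    rw [Metric.mem_closedBall, dist_zero_right, Prod.norm_def]
    have h1 : |q.1| ≤ 2 := by nlinarith [sq_nonneg q.1, sq_nonneg q.2, sq_abs q.1, abs_nonneg q.1]
    have h2 : |q.2| ≤ 2 := by nlinarith [sq_nonneg q.1, sq_nonneg q.2, sq_abs q.2, abs_nonneg q.2]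
    simp only [Real.norm_eq_abs]
    exact max_le h1 h2

include hp in
lemma psi_closed (hx : Nonconstant x) : IsClosed (psiMap G p x '' circleSet) :=
  (circle_compact.image_of_continuousOn (psi_continuousOn hp hx)).isClosed

include hp in
lemma psi_Q_le (hx : Nonconstant x) {q : ℝ × ℝ} (hq : q ∈ circleSet) :
    G.Q p (psiMap G p x q) ≤ G.Rq p x := by
  have hn := n_pos (G := G) (p := p) hx hq
  set n := G.normLpPow p (yMap x q) with hndef
  set t : ℝ := n ^ (-p⁻¹) with htdef
  have ht : (0:ℝ) ≤ t := Real.rpow_nonneg hn.le _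
  have htp : t ^ p = n⁻¹ := by
    rw [htdef, ← Real.rpow_mul hn.le, neg_mul, inv_mul_cancel₀ (by positivity : p ≠ 0)]
    exact Real.rpow_neg_one n
  have hpsi : psiMap G p x q = fun v => (t * q.1) * x v + t * q.2 := by
    funext v; simp only [psiMap, yMap, ← htdef]; ring
  have hQ : G.Q p (psiMap G p x q) = |t * q.1| ^ p * G.Q p x := by
    rw [hpsi]; exact Q_affine G x (t * q.1) (t * q.2)
  have hZpos : 0 < G.Z p x := Z_pos G hp hx
  have hQx : 0 ≤ G.Q p x := Q_nonneg G x
  have hRq : G.Rq p x = G.Q p x / G.Z p x := rfl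
  rcases eq_or_ne q.1 0 with h1 | h1
  · rw [hQ, h1, mul_zero, abs_zero, Real.zero_rpow (by positivity : p ≠ 0), zero_mul, hRq]
    positivity
  · -- n ≥ |q.1|^p * Z
    have hc : ∀ v, |yMap x q v| = |q.1| * |x v - (- q.2 / q.1)| := by
      intro v
      rw [← abs_mul]
      congr 1
      simp only [yMap]
      field_simp [yMap]
      ring
    have hneq : n = |q.1| ^ p * ∑ v, G.μ v * |x v - (- q.2 / q.1)| ^ p := by
      rw [hndef]
      unfold SubmodularHypergraph.normLpPow
      rw [Finset.mul_sum]
      apply Finset.sum_congr rfl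
      intro v _
      rw [hc v, Real.mul_rpow (abs_nonneg _) (abs_nonneg _)]
      ring
    have hnZ : |q.1| ^ p * G.Z p x ≤ n := by
      rw [hneq]
      exact mul_le_mul_of_nonneg_left (Z_le G x _) (Real.rpow_nonneg (abs_nonneg _) p)
    have habs : |t * q.1| ^ p = n⁻¹ * |q.1| ^ p := by
      rw [abs_mul, abs_of_nonneg ht, Real.mul_rpow ht (abs_nonneg _), htp]
    rw [hQ, habs, hRq]
    have hkey : n⁻¹ * |q.1| ^ p ≤ 1 / G.Z p x := by
      rw [inv_mul_eq_div, div_le_div_iff₀ hn hZpos, one_mul]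
      exact hnZ
    calc n⁻¹ * |q.1| ^ p * G.Q p x ≤ (1 / G.Z p x) * G.Q p x :=
          mul_le_mul_of_nonneg_right hkey hQx
      _ = G.Q p x / G.Z p x := by ring

end psi

section genusSec

variable {N : ℕ}

lemma genus_le_one {A : Set (Fin N → ℝ)} {f : (Fin N → ℝ) → ℝ}
    (hc : ContinuousOn f A) (hodd : ∀ z ∈ A, f (-z) = - f z)
    (hnz : ∀ z ∈ A, f z ≠ 0) : genus A ≤ ((1:ℕ) : ℕ∞) := by
  apply sInf_le
  refine ⟨1, ⟨fun z => fun _ => f z, continuousOn_pi.mpr fun _ => hc,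
    fun z hz => funext fun i => by simp [hodd z hz], fun z hz h0 => hnz z hz ?_⟩, rfl⟩
  exact congrFun h0 0

lemma genus_empty_le : genus (∅ : Set (Fin N → ℝ)) ≤ ((0:ℕ) : ℕ∞) := by
  apply sInf_le
  exact ⟨0, ⟨fun _ => 0, continuousOn_empty _,
    fun x hx => absurd hx (Set.notMem_empty x),
    fun x hx => absurd hx (Set.notMem_empty x)⟩, rfl⟩

lemma two_le_contr {m : ℕ} (hm : m ≤ 1) {b : ℕ∞} (h2 : ((2:ℕ) : ℕ∞) ≤ b)
    (hb : b ≤ ((m:ℕ) : ℕ∞)) : False := by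
  have := le_trans h2 hb
  have h : (2:ℕ) ≤ m := by exact_mod_cast this
  omega

end genusSec

section psi2

variable {N : ℕ} {G : SubmodularHypergraph N} {p : ℝ} {x : Fin N → ℝ} (hp : 1 < p)

include hp in
lemma psi_genus (hx : Nonconstant x) :
    ((2:ℕ) : ℕ∞) ≤ genus (psiMap G p x '' circleSet) := by
  set A := psiMap G p x '' circleSet with hA
  apply le_sInf
  rintro b ⟨n, hn, rfl⟩
  by_contra hlt
  push_neg at hlt
  have hn2 : n < 2 := by exact_mod_cast hlt
  have hq0 : ((1:ℝ), (0:ℝ)) ∈ circleSet := by simp [circleSet]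
  obtain ⟨h, hcont, hodd, hnz⟩ := hn
  interval_cases n
  · exact hnz _ ⟨_, hq0, rfl⟩ (funext fun i => i.elim0)
  · set ψ : ℝ → (Fin N → ℝ) := fun θ => psiMap G p x (Real.cos θ, Real.sin θ) with hψ
    have hmemC : ∀ θ, (Real.cos θ, Real.sin θ) ∈ circleSet := fun θ => by
      simp [circleSet, Real.cos_sq_add_sin_sq]
    have hmemA : ∀ θ, ψ θ ∈ A := fun θ => ⟨_, hmemC θ, rfl⟩
    set g : ℝ → ℝ := fun θ => h (ψ θ) 0 with hg
    have hψcont : ContinuousOn ψ (Set.uIcc 0 Real.pi) := by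
      apply (psi_continuousOn hp hx).comp
        (Continuous.continuousOn (by continuity)) (fun θ _ => hmemC θ)
    have hcontg : ContinuousOn g (Set.uIcc 0 Real.pi) := by
      have h2 : ContinuousOn (fun θ => h (ψ θ)) (Set.uIcc 0 Real.pi) :=
        hcont.comp hψcont (fun θ _ => hmemA θ)
      exact (continuous_apply (0 : Fin 1)).comp_continuousOn h2
    have hgpi : g Real.pi = - g 0 := by
      have hψpi : ψ Real.pi = - ψ 0 := by
        rw [hψ]
        simp only [Real.cos_pi, Real.sin_pi, Real.cos_zero, Real.sin_zero]
        have hq : ((-1 : ℝ), (0:ℝ)) = -((1:ℝ), (0:ℝ)) := by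
          simp [Prod.ext_iff]
        rw [hq, psi_neg]
      show h (ψ Real.pi) 0 = - h (ψ 0) 0
      rw [hψpi, hodd _ (hmemA 0)]
      simp
    have h0mem : (0:ℝ) ∈ Set.uIcc (g 0) (g Real.pi) := by
      rw [hgpi, Set.mem_uIcc]
      rcases le_total (g 0) 0 with hle | hle
      · exact Or.inl ⟨hle, by linarith⟩
      · exact Or.inr ⟨by linarith, hle⟩
    obtain ⟨θ, hθmem, hθ⟩ := intermediate_value_uIcc hcontg h0mem
    apply hnz _ (hmemA θ)
    funext i
    have hi : i = 0 := Subsingleton.elim _ _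
    rw [hi]
    exact hθ

end psi2

section bddSec

variable {N : ℕ} (G : SubmodularHypergraph N) {p : ℝ} (hp : 1 < p)

include hp in
lemma Q_bounded [Nonempty (Fin N)] :
    ∃ B : ℝ, ∀ z : Fin N → ℝ, G.normLpPow p z = 1 → G.Q p z ≤ B := by
  set M : ℝ := ⨆ v, ((G.μ v)⁻¹) ^ (p⁻¹ : ℝ) with hM
  refine ⟨∑ e ∈ G.E, G.θ e * (2 * M) ^ p, ?_⟩
  intro z hz
  have habs : ∀ v, |z v| ≤ M := by
    intro v
    have h1 : G.μ v * |z v| ^ p ≤ 1 := by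
      rw [← hz]
      exact Finset.single_le_sum (f := fun w => G.μ w * |z w| ^ p)
        (fun w _ => mul_nonneg (G.μ_pos w).le (Real.rpow_nonneg (abs_nonneg _) p))
        (Finset.mem_univ v)
    have h2 : |z v| ^ p ≤ (G.μ v)⁻¹ := by
      have hμ := G.μ_pos v
      calc |z v| ^ p = (G.μ v)⁻¹ * (G.μ v * |z v| ^ p) := by field_simp
        _ ≤ (G.μ v)⁻¹ * 1 := mul_le_mul_of_nonneg_left h1 (by positivity)
        _ = (G.μ v)⁻¹ := mul_one _
    calc |z v| = (|z v| ^ p) ^ (p⁻¹ : ℝ) := by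
          rw [Real.rpow_rpow_inv (abs_nonneg _) (by positivity : p ≠ 0)]
      _ ≤ ((G.μ v)⁻¹) ^ (p⁻¹ : ℝ) :=
          Real.rpow_le_rpow (Real.rpow_nonneg (abs_nonneg _) p) h2 (by positivity)
      _ ≤ M := le_ciSup (bddA fun v => ((G.μ v)⁻¹) ^ (p⁻¹ : ℝ)) v
  have hfe : ∀ e ∈ G.E, G.fe e z ≤ 2 * M := by
    intro e he
    have h1 := lovasz_le (G.w e) z (G.w_nonneg e he) (G.w_le_one e he)
    have hs : (⨆ v, z v) ≤ M := ciSup_le fun v => le_trans (le_abs_self _) (habs v)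
    have hi : -M ≤ ⨅ v, z v := le_ciInf fun v => (abs_le.mp (habs v)).1
    calc G.fe e z ≤ (⨆ v, z v) - (⨅ v, z v) := h1
      _ ≤ 2 * M := by linarith
  apply Finset.sum_le_sum
  intro e he
  exact mul_le_mul_of_nonneg_left
    (Real.rpow_le_rpow (fe_nonneg G he z) (hfe e he) (by linarith)) (G.θ_pos e he).le

end bddSec

section balSec

variable {N : ℕ} (G : SubmodularHypergraph N) (p : ℝ)

def balFun (z : Fin N → ℝ) : ℝ := ∑ v, G.μ v * (|z v| ^ (p - 1) * sgn (z v))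

lemma balFun_continuous (hp : 1 < p) : Continuous (balFun G p) := by
  apply continuous_finset_sum
  intro v _
  exact continuous_const.mul ((phi_cont (by linarith : (0:ℝ) < p - 1)).comp
    (continuous_apply v))

lemma balFun_neg (z : Fin N → ℝ) : balFun G p (-z) = - balFun G p z := by
  unfold balFun
  rw [← Finset.sum_neg_distrib]
  apply Finset.sum_congr rfl
  intro v _
  simp only [Pi.neg_apply, abs_neg, sgn_neg']
  ring

end balSec

/-- For `p > 1`,
`λ₂^{(p)} = inf over nonconstant x of 𝓡_p(x) = Q_p(x)/Z_{p,μ}(x)`. -/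
theorem stmt13 {N : ℕ} (G : SubmodularHypergraph N) (p : ℝ) (hp : 1 < p) :
    G.varEigen p 2 = sInf {r : ℝ | ∃ x : Fin N → ℝ, Nonconstant x ∧ r = G.Rq p x} := by
  classical
  by_cases hNc : ∃ x : Fin N → ℝ, Nonconstant x
  · obtain ⟨x₀, hx₀⟩ := hNc
    have hNe : Nonempty (Fin N) := by
      obtain ⟨u, -, -⟩ := hx₀; exact ⟨u⟩
    have hRq_nonneg : ∀ x : Fin N → ℝ, 0 ≤ G.Rq p x := fun x =>
      div_nonneg (Q_nonneg G x) (Z_nonneg G x)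
    have hS0 : ∀ r ∈ {r : ℝ | ∃ x : Fin N → ℝ, Nonconstant x ∧ r = G.Rq p x}, 0 ≤ r := by
      rintro r ⟨x, hx, rfl⟩; exact hRq_nonneg x
    have hAprop : ∀ x : Fin N → ℝ, Nonconstant x →
        (psiMap G p x '' circleSet) ∈
          {A : Set (Fin N → ℝ) | IsClosed A ∧ (∀ y ∈ A, -y ∈ A) ∧
            A ⊆ {y | G.normLpPow p y = 1} ∧ ((2:ℕ) : ℕ∞) ≤ genus A} := by
      intro x hx
      refine ⟨psi_closed hp hx, ?_, ?_, psi_genus hp hx⟩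
      · rintro z ⟨q, hq, rfl⟩
        refine ⟨-q, ?_, psi_neg q⟩
        simp only [circleSet, Set.mem_setOf_eq, Prod.fst_neg, Prod.snd_neg, neg_sq]
        exact hq
      · rintro z ⟨q, hq, rfl⟩
        exact psi_sphere hp hx hq
    have hsSupA : ∀ x : Fin N → ℝ, Nonconstant x →
        sSup (G.Q p '' (psiMap G p x '' circleSet)) ≤ G.Rq p x := by
      intro x hx
      apply Real.sSup_le ?_ (hRq_nonneg x)
      rintro b ⟨z, ⟨q, hq, rfl⟩, rfl⟩
      exact psi_Q_le hp hx hq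
    have hT0 : BddBelow ((fun A : Set (Fin N → ℝ) => sSup (G.Q p '' A)) ''
        {A : Set (Fin N → ℝ) | IsClosed A ∧ (∀ y ∈ A, -y ∈ A) ∧
          A ⊆ {y | G.normLpPow p y = 1} ∧ ((2:ℕ) : ℕ∞) ≤ genus A}) := by
      refine ⟨0, ?_⟩
      rintro b ⟨A, hA, rfl⟩
      apply Real.sSup_nonneg
      rintro y ⟨z, hz, rfl⟩
      exact Q_nonneg G z
    apply le_antisymm
    · have hmem1 : G.Rq p x₀ ∈ {r : ℝ | ∃ x : Fin N → ℝ, Nonconstant x ∧ r = G.Rq p x} :=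
        ⟨x₀, hx₀, rfl⟩
      apply le_csInf ⟨_, hmem1⟩
      rintro r ⟨x, hx, rfl⟩
      calc G.varEigen p 2 ≤ sSup (G.Q p '' (psiMap G p x '' circleSet)) :=
            csInf_le hT0 ⟨_, hAprop x hx, rfl⟩
        _ ≤ G.Rq p x := hsSupA x hx
    · have hmem2 : sSup (G.Q p '' (psiMap G p x₀ '' circleSet)) ∈
          ((fun A : Set (Fin N → ℝ) => sSup (G.Q p '' A)) ''
            {A : Set (Fin N → ℝ) | IsClosed A ∧ (∀ y ∈ A, -y ∈ A) ∧
              A ⊆ {y | G.normLpPow p y = 1} ∧ ((2:ℕ) : ℕ∞) ≤ genus A}) :=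
        ⟨_, hAprop x₀ hx₀, rfl⟩
      apply le_csInf ⟨_, hmem2⟩
      rintro b ⟨A, ⟨hcl, hsym, hsph, hgen⟩, rfl⟩
      obtain ⟨B, hB⟩ := Q_bounded G hp
      have hbdd : BddAbove (G.Q p '' A) := by
        refine ⟨B, ?_⟩
        rintro y ⟨z, hz, rfl⟩
        exact hB z (hsph hz)
      have hzex : ∃ z ∈ A, balFun G p z = 0 := by
        by_contra hno
        push_neg at hno
        have hle := genus_le_one ((balFun_continuous G p hp).continuousOn)
          (fun z _ => balFun_neg G p z) hno
        exact two_le_contr le_rfl hgen hle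
      obtain ⟨z, hzA, hz0⟩ := hzex
      have hzs : G.normLpPow p z = 1 := hsph hzA
      have hznc : Nonconstant z := by
        by_contra hznc
        unfold Nonconstant at hznc
        push_neg at hznc
        set v₀ : Fin N := Classical.arbitrary (Fin N) with hv₀
        set c : ℝ := z v₀ with hc
        have hzc : ∀ v, z v = c := fun v => hznc v v₀
        rcases eq_or_ne c 0 with h0 | h0
        · have : G.normLpPow p z = 0 := by
            unfold SubmodularHypergraph.normLpPow
            apply Finset.sum_eq_zero
            intro v _
            rw [hzc v, h0, abs_zero, Real.zero_rpow (by positivity : p ≠ 0), mul_zero]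
          rw [this] at hzs; norm_num at hzs
        · have hbal : balFun G p z = (∑ v, G.μ v) * (|c| ^ (p - 1) * sgn c) := by
            unfold balFun
            rw [Finset.sum_mul]
            apply Finset.sum_congr rfl
            intro v _
            rw [hzc v]
          have hKne : |c| ^ (p - 1) * sgn c ≠ 0 := by
            have h1 : (0:ℝ) < |c| ^ (p - 1) := Real.rpow_pos_of_pos (abs_pos.mpr h0) _
            rcases lt_trichotomy c 0 with hlt | heq | hgt
            · rw [sgn_of_neg hlt]; intro hcontr; nlinarith
            · exact absurd heq h0
            · rw [sgn_of_pos hgt]; intro hcontr; nlinarith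
          have hμsum : (0:ℝ) < ∑ v, G.μ v :=
            Finset.sum_pos (fun v _ => G.μ_pos v) Finset.univ_nonempty
          exact (mul_ne_zero hμsum.ne' hKne) (hbal ▸ hz0)
      have hRz : G.Rq p z = G.Q p z := by
        have : G.Rq p z = G.Q p z / G.Z p z := rfl
        rw [this, Z_eq_of_balanced G hp hz0, hzs, div_one]
      calc sInf {r : ℝ | ∃ x : Fin N → ℝ, Nonconstant x ∧ r = G.Rq p x}
          ≤ G.Rq p z := csInf_le ⟨0, fun r hr => hS0 r hr⟩ ⟨z, hznc, rfl⟩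
        _ = G.Q p z := hRz
        _ ≤ sSup (G.Q p '' A) := le_csSup hbdd ⟨z, hzA, rfl⟩
  · have hSempty : {r : ℝ | ∃ x : Fin N → ℝ, Nonconstant x ∧ r = G.Rq p x} = ∅ := by
      ext r
      simp only [Set.mem_setOf_eq, Set.mem_empty_iff_false, iff_false]
      rintro ⟨x, hx, -⟩
      exact hNc ⟨x, hx⟩
    have hTempty : {A : Set (Fin N → ℝ) | IsClosed A ∧ (∀ y ∈ A, -y ∈ A) ∧
        A ⊆ {y | G.normLpPow p y = 1} ∧ ((2:ℕ) : ℕ∞) ≤ genus A} = ∅ := by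
      ext A
      simp only [Set.mem_setOf_eq, Set.mem_empty_iff_false, iff_false]
      rintro ⟨hcl, hsym, hsph, hgen⟩
      rcases A.eq_empty_or_nonempty with rfl | ⟨z, hzA⟩
      · exact two_le_contr (by norm_num) hgen genus_empty_le
      · have hNe : Nonempty (Fin N) := by
          by_contra hE
          have hemp : IsEmpty (Fin N) := not_nonempty_iff.mp hE
          have h1 : G.normLpPow p z = 1 := hsph hzA
          unfold SubmodularHypergraph.normLpPow at h1
          rw [Finset.univ_eq_empty, Finset.sum_empty] at h1
          norm_num at h1
        set v₀ : Fin N := Classical.arbitrary (Fin N) with hv₀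
        have hall : ∀ (w : Fin N → ℝ) (u v : Fin N), w u = w v := by
          intro w u v
          by_contra hne
          exact hNc ⟨w, u, v, hne⟩
        have hle := genus_le_one (A := A) (f := fun w => w v₀)
          (continuous_apply v₀).continuousOn (fun w _ => rfl) ?_
        · exact two_le_contr (by norm_num) hgen hle
        · intro w hw h0
          have h0' : w v₀ = 0 := h0
          have hws : G.normLpPow p w = 1 := hsph hw
          have : G.normLpPow p w = 0 := by
            unfold SubmodularHypergraph.normLpPow
            apply Finset.sum_eq_zero
            intro v _
            rw [hall w v v₀, h0', abs_zero, Real.zero_rpow (by positivity : p ≠ 0), mul_zero]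
          rw [this] at hws; norm_num at hws
    unfold SubmodularHypergraph.varEigen
    rw [hTempty, hSempty, Set.image_empty, Real.sInf_empty]
end
end

section
/- Let G = (V, E, w, μ) be a submodular hypergraph. Then λ₂^{(1)} = inf over nonconstant x ∈ ℝ^N of 𝓡_1(x) = Q_1(x)/Z_{1,μ}(x), and this common value equals the 2-way Cheeger constant h₂. -/
open scoped BigOperators
open Finset

noncomputable section

/-! ### Auxiliary machinery for `stmt14` -/

namespace Stmt14

open MeasureTheory Set

variable {N : ℕ}

/-- Superlevel set of `x` at threshold `t`. -/
def SL (x : Fin N → ℝ) (t : ℝ) : Finset (Fin N) := Finset.univ.filter fun v => t < x v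

lemma measurableSet_SL_eq (x : Fin N → ℝ) (S : Finset (Fin N)) :
    MeasurableSet {t : ℝ | SL x t = S} := by
  have h : {t : ℝ | SL x t = S}
      = ⋂ v : Fin N, {t : ℝ | t < x v ↔ v ∈ S} := by
    ext t
    simp only [Set.mem_iInter, Set.mem_setOf_eq, SL, Finset.ext_iff, Finset.mem_filter,
      Finset.mem_univ, true_and]
  rw [h]
  refine MeasurableSet.iInter fun v => ?_
  by_cases hv : v ∈ S
  · have : {t : ℝ | t < x v ↔ v ∈ S} = Set.Iio (x v) := by ext t; simp [hv]
    rw [this]; exact measurableSet_Iio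
  · have : {t : ℝ | t < x v ↔ v ∈ S} = Set.Ici (x v) := by ext t; simp [hv, not_lt]
    rw [this]; exact measurableSet_Ici

lemma measurable_SLfun (F : Finset (Fin N) → ℝ) (x : Fin N → ℝ) :
    Measurable fun t => F (SL x t) := by
  have h : (fun t => F (SL x t))
      = fun t => ∑ S : Finset (Fin N), if SL x t = S then F S else 0 := by
    funext t
    rw [Finset.sum_ite_eq Finset.univ (SL x t) F]
    simp
  rw [h]
  refine Finset.measurable_sum _ fun S _ => ?_
  exact Measurable.ite (measurableSet_SL_eq x S) measurable_const measurable_const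

lemma intervalIntegrable_of_bdd {f : ℝ → ℝ} (hm : Measurable f) {C : ℝ}
    (hb : ∀ t, |f t| ≤ C) (a b : ℝ) : IntervalIntegrable f volume a b := by
  refine (intervalIntegrable_const (c := C)).mono_fun' hm.aestronglyMeasurable ?_
  exact Filter.Eventually.of_forall fun t => by simpa [Real.norm_eq_abs] using hb t

lemma SL_intervalIntegrable (F : Finset (Fin N) → ℝ) (x : Fin N → ℝ) (a b : ℝ) :
    IntervalIntegrable (fun t => F (SL x t)) volume a b := by
  refine intervalIntegrable_of_bdd (measurable_SLfun F x)
    (C := ∑ S : Finset (Fin N), |F S|) (fun t => ?_) a b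
  exact Finset.single_le_sum (f := fun S => |F S|) (fun S _ => abs_nonneg _)
    (Finset.mem_univ _)

lemma indicator_lt_intervalIntegrable (r c a b : ℝ) :
    IntervalIntegrable (fun t => if t < r then c else 0) volume a b := by
  refine intervalIntegrable_of_bdd ?_ (C := |c|) (fun t => ?_) a b
  · exact Measurable.ite measurableSet_Iio measurable_const measurable_const
  · split_ifs <;> simp

lemma indicator_le_intervalIntegrable (r c a b : ℝ) :
    IntervalIntegrable (fun t => if r ≤ t then c else 0) volume a b := by
  refine intervalIntegrable_of_bdd ?_ (C := |c|) (fun t => ?_) a b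
  · exact Measurable.ite measurableSet_Ici measurable_const measurable_const
  · split_ifs <;> simp

lemma integral_eq_of_eqOn_Ioo {g : ℝ → ℝ} {a b k : ℝ} (hab : a ≤ b)
    (h : ∀ t ∈ Set.Ioo a b, g t = k) :
    ∫ t in a..b, g t = (b - a) * k := by
  have hcong : ∫ t in a..b, g t = ∫ t in a..b, (k : ℝ) := by
    refine intervalIntegral.integral_congr_ae ?_
    rw [MeasureTheory.ae_iff]
    have hsub : {t : ℝ | ¬ (t ∈ Set.uIoc a b → g t = k)} ⊆ ({b} : Set ℝ) := by
      intro t ht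
      simp only [Set.mem_setOf_eq, Classical.not_imp] at ht
      obtain ⟨ht1, ht2⟩ := ht
      rw [Set.uIoc_of_le hab] at ht1
      rcases eq_or_lt_of_le ht1.2 with hh | hh
      · exact hh
      · exact absurd (h t ⟨ht1.1, hh⟩) ht2
    exact MeasureTheory.measure_mono_null hsub (MeasureTheory.measure_singleton b)
  rw [hcong, intervalIntegral.integral_const, smul_eq_mul]

lemma integral_mono_Ioo {f g : ℝ → ℝ} {a b : ℝ} (hab : a ≤ b)
    (hf : IntervalIntegrable f volume a b) (hg : IntervalIntegrable g volume a b)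
    (h : ∀ t ∈ Set.Ioo a b, f t ≤ g t) : ∫ t in a..b, f t ≤ ∫ t in a..b, g t := by
  refine intervalIntegral.integral_mono_ae_restrict hab hf hg ?_
  rw [Filter.EventuallyLE, MeasureTheory.ae_restrict_iff' measurableSet_Icc,
    MeasureTheory.ae_iff]
  have hsub : {t : ℝ | ¬ (t ∈ Set.Icc a b → f t ≤ g t)} ⊆ ({a, b} : Set ℝ) := by
    intro t ht
    simp only [Set.mem_setOf_eq, Classical.not_imp] at ht
    obtain ⟨ht1, ht2⟩ := ht
    rcases eq_or_lt_of_le ht1.1 with h1 | h1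
    · exact Or.inl h1.symm
    rcases eq_or_lt_of_le ht1.2 with h2 | h2
    · exact Or.inr h2
    · exact absurd (h t ⟨h1, h2⟩) ht2
  refine MeasureTheory.measure_mono_null hsub ?_
  exact ((Set.finite_singleton b).insert a).measure_zero _

end Stmt14

namespace Stmt14

open MeasureTheory Set SubmodularHypergraph

variable {N : ℕ}

lemma iInf_le_app (x : Fin N → ℝ) (v : Fin N) : (⨅ u, x u) ≤ x v :=
  ciInf_le (Set.Finite.bddBelow (Set.finite_range x)) v

lemma app_le_iSup (x : Fin N → ℝ) (v : Fin N) : x v ≤ ⨆ u, x u :=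
  le_ciSup (Set.Finite.bddAbove (Set.finite_range x)) v

lemma exists_not_mem_of_ne_univ {S : Finset (Fin N)} (h : S ≠ Finset.univ) :
    ∃ v, v ∉ S := by
  by_contra hc
  push_neg at hc
  exact h (Finset.eq_univ_iff_forall.2 hc)

lemma abs_sub_eq_maxes (a b : ℝ) : |a - b| = max (a - b) 0 + max (b - a) 0 := by
  rcases le_total a b with h | h
  · rw [abs_of_nonpos (sub_nonpos.2 h), max_eq_right (sub_nonpos.2 h),
      max_eq_left (sub_nonneg.2 h)]; ring
  · rw [abs_of_nonneg (sub_nonneg.2 h), max_eq_left (sub_nonneg.2 h),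
      max_eq_right (sub_nonpos.2 h)]; ring

lemma integral_indicator_lt {r c M k : ℝ} (hcM : c ≤ M) (hrM : r ≤ M) :
    ∫ t in c..M, (if t < r then k else 0) = k * max (r - c) 0 := by
  by_cases h : r ≤ c
  · rw [integral_eq_of_eqOn_Ioo hcM (k := 0) (fun t ht => if_neg (not_lt.2 (h.trans ht.1.le)))]
    rw [max_eq_right (sub_nonpos.2 h)]; ring
  · push_neg at h
    rw [← intervalIntegral.integral_add_adjacent_intervals (b := r)
      (indicator_lt_intervalIntegrable r k c r) (indicator_lt_intervalIntegrable r k r M),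
      integral_eq_of_eqOn_Ioo h.le (k := k) (fun t ht => if_pos ht.2),
      integral_eq_of_eqOn_Ioo hrM (k := 0) (fun t ht => if_neg (not_lt.2 ht.1.le)),
      max_eq_left (sub_nonneg.2 h.le)]
    ring

lemma integral_indicator_le {r m c k : ℝ} (hmc : m ≤ c) (hmr : m ≤ r) :
    ∫ t in m..c, (if r ≤ t then k else 0) = k * max (c - r) 0 := by
  by_cases h : c ≤ r
  · rw [integral_eq_of_eqOn_Ioo hmc (k := 0) (fun t ht => if_neg (not_le.2 (ht.2.trans_le h)))]
    rw [max_eq_right (sub_nonpos.2 h)]; ring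
  · push_neg at h
    rw [← intervalIntegral.integral_add_adjacent_intervals (b := r)
      (indicator_le_intervalIntegrable r k m r) (indicator_le_intervalIntegrable r k r c),
      integral_eq_of_eqOn_Ioo hmr (k := 0) (fun t ht => if_neg (not_le.2 ht.2)),
      integral_eq_of_eqOn_Ioo h.le (k := k) (fun t ht => if_pos ht.1.le),
      max_eq_left (sub_nonneg.2 h.le)]
    ring

end Stmt14

namespace SubmodularHypergraph

open MeasureTheory Set Stmt14

variable {N : ℕ} (G : SubmodularHypergraph N)

lemma vol_nonneg (S : Finset (Fin N)) : 0 ≤ G.vol S :=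
  Finset.sum_nonneg fun v _ => (G.μ_pos v).le

lemma vol_mono {S T : Finset (Fin N)} (h : S ⊆ T) : G.vol S ≤ G.vol T :=
  Finset.sum_le_sum_of_subset_of_nonneg h fun v _ _ => (G.μ_pos v).le

lemma vol_pos {S : Finset (Fin N)} (h : S.Nonempty) : 0 < G.vol S :=
  Finset.sum_pos (fun v _ => G.μ_pos v) h

lemma vol_compl (S : Finset (Fin N)) : G.vol Sᶜ = G.vol Finset.univ - G.vol S := by
  have := Finset.sum_compl_add_sum S (fun v => G.μ v)
  unfold vol; linarith

lemma volB_nonneg (S : Finset (Fin N)) : 0 ≤ G.volB S :=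
  Finset.sum_nonneg fun e he => mul_nonneg (G.θ_pos e he).le (G.w_nonneg e he S)

lemma volB_empty : G.volB ∅ = 0 :=
  Finset.sum_eq_zero fun e he => by rw [G.w_empty e he, mul_zero]

lemma w_compl {e : Finset (Fin N)} (he : e ∈ G.E) (S : Finset (Fin N)) :
    G.w e Sᶜ = G.w e S := by
  rw [G.w_inter e he S, G.w_inter e he Sᶜ, G.w_symm e he (S ∩ e) (Finset.inter_subset_right)]
  congr 1
  ext v
  simp only [Finset.mem_sdiff, Finset.mem_inter, Finset.mem_compl]
  tauto

lemma volB_compl (S : Finset (Fin N)) : G.volB Sᶜ = G.volB S :=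
  Finset.sum_congr rfl fun e he => by rw [G.w_compl he S]

lemma conductance_nonneg (S : Finset (Fin N)) : 0 ≤ G.conductance S :=
  div_nonneg (G.volB_nonneg S) (le_min (G.vol_nonneg S) (G.vol_nonneg Sᶜ))

lemma Q_one (x : Fin N → ℝ) : G.Q 1 x = ∑ e ∈ G.E, G.θ e * G.fe e x := by
  unfold Q; simp [Real.rpow_one]

lemma normLpPow_one (x : Fin N → ℝ) : G.normLpPow 1 x = ∑ v, G.μ v * |x v| := by
  unfold normLpPow; simp [Real.rpow_one]

lemma Z_one (x : Fin N → ℝ) : G.Z 1 x = ⨅ c : ℝ, ∑ v, G.μ v * |x v - c| := by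
  unfold Z; simp [Real.rpow_one]

lemma fe_eq (e : Finset (Fin N)) (x : Fin N → ℝ) :
    G.fe e x = ∫ t in (⨅ v, x v)..(⨆ v, x v), G.w e (SL x t) := rfl

lemma fe_nonneg [Nonempty (Fin N)] {e : Finset (Fin N)} (he : e ∈ G.E) (x : Fin N → ℝ) :
    0 ≤ G.fe e x := by
  rw [fe_eq]
  refine intervalIntegral.integral_nonneg ?_ (fun t _ => G.w_nonneg e he _)
  exact (iInf_le_app x (Classical.arbitrary _)).trans (app_le_iSup x _)

lemma Q_nonneg [Nonempty (Fin N)] (x : Fin N → ℝ) : 0 ≤ G.Q 1 x := by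
  rw [Q_one]
  exact Finset.sum_nonneg fun e he => mul_nonneg (G.θ_pos e he).le (G.fe_nonneg he x)

lemma Q_eq_integral [Nonempty (Fin N)] (x : Fin N → ℝ) :
    G.Q 1 x = ∫ t in (⨅ v, x v)..(⨆ v, x v), G.volB (SL x t) := by
  rw [Q_one]
  unfold volB
  rw [intervalIntegral.integral_finset_sum
    (fun e _ => SL_intervalIntegrable (fun S => G.θ e * G.w e S) x _ _)]
  exact Finset.sum_congr rfl fun e _ => by
    rw [fe_eq, ← intervalIntegral.integral_const_mul]

lemma Z_le (x : Fin N → ℝ) (c : ℝ) : G.Z 1 x ≤ ∑ v, G.μ v * |x v - c| := by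
  rw [Z_one]
  refine ciInf_le ⟨0, ?_⟩ c
  rintro y ⟨d, rfl⟩
  exact Finset.sum_nonneg fun v _ => mul_nonneg (G.μ_pos v).le (abs_nonneg _)

lemma Z_nonneg (x : Fin N → ℝ) : 0 ≤ G.Z 1 x := by
  rw [Z_one]
  exact le_ciInf fun c => Finset.sum_nonneg fun v _ => mul_nonneg (G.μ_pos v).le (abs_nonneg _)

lemma Z_pos {x : Fin N → ℝ} (hx : Nonconstant x) : 0 < G.Z 1 x := by
  obtain ⟨u, v, huv⟩ := hx
  have hne : u ≠ v := fun h => huv (by rw [h])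
  rw [Z_one]
  have key : ∀ c : ℝ, min (G.μ u) (G.μ v) * |x u - x v| ≤ ∑ w, G.μ w * |x w - c| := by
    intro c
    have h1 : G.μ u * |x u - c| + G.μ v * |x v - c| ≤ ∑ w, G.μ w * |x w - c| := by
      have h0 : ∑ w ∈ ({u, v} : Finset (Fin N)), G.μ w * |x w - c|
          ≤ ∑ w, G.μ w * |x w - c| :=
        Finset.sum_le_sum_of_subset_of_nonneg (Finset.subset_univ _)
          (fun w _ _ => mul_nonneg (G.μ_pos w).le (abs_nonneg _))
      rwa [Finset.sum_pair hne] at h0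
    have h2 : min (G.μ u) (G.μ v) * |x u - x v|
        ≤ G.μ u * |x u - c| + G.μ v * |x v - c| := by
      have h3 : |x u - x v| ≤ |x u - c| + |x v - c| := by
        have := abs_sub_le (x u) c (x v)
        rwa [abs_sub_comm c (x v)] at this
      calc min (G.μ u) (G.μ v) * |x u - x v|
          ≤ min (G.μ u) (G.μ v) * (|x u - c| + |x v - c|) := by
            exact mul_le_mul_of_nonneg_left h3 (le_min (G.μ_pos u).le (G.μ_pos v).le)
        _ ≤ G.μ u * |x u - c| + G.μ v * |x v - c| := by
            rw [mul_add]
            exact add_le_add (mul_le_mul_of_nonneg_right (min_le_left _ _) (abs_nonneg _))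
              (mul_le_mul_of_nonneg_right (min_le_right _ _) (abs_nonneg _))
    linarith
  have hpos : 0 < min (G.μ u) (G.μ v) * |x u - x v| :=
    mul_pos (lt_min (G.μ_pos u) (G.μ_pos v)) (abs_pos.2 (sub_ne_zero.2 huv))
  exact lt_of_lt_of_le hpos (le_ciInf key)

end SubmodularHypergraph

namespace SubmodularHypergraph

open MeasureTheory Set Stmt14

variable {N : ℕ} (G : SubmodularHypergraph N)

lemma vol_SL_eq (x : Fin N → ℝ) (t : ℝ) :
    G.vol (SL x t) = ∑ v, if t < x v then G.μ v else 0 := by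
  unfold vol SL
  rw [Finset.sum_filter]

lemma vol_SL_compl_eq (x : Fin N → ℝ) (t : ℝ) :
    G.vol ((SL x t)ᶜ) = ∑ v, if x v ≤ t then G.μ v else 0 := by
  unfold vol SL
  rw [Finset.compl_filter, Finset.sum_filter]
  simp only [not_lt]

lemma coarea [Nonempty (Fin N)] {h2 : ℝ}
    (h2le : ∀ S : Finset (Fin N), S.Nonempty → S ≠ Finset.univ →
      h2 * min (G.vol S) (G.vol Sᶜ) ≤ G.volB S)
    (x : Fin N → ℝ) {c : ℝ}
    (hc1 : G.vol (Finset.univ.filter fun v => c < x v) ≤ G.vol Finset.univ / 2)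
    (hc2 : G.vol (Finset.univ.filter fun v => x v < c) ≤ G.vol Finset.univ / 2) :
    h2 * ∑ v, G.μ v * |x v - c| ≤ G.Q 1 x := by
  have hVpos : 0 < G.vol Finset.univ := G.vol_pos Finset.univ_nonempty
  have hlow : ∃ v, x v ≤ c := by
    by_contra hcon
    push_neg at hcon
    have h : (Finset.univ.filter fun v => c < x v) = Finset.univ :=
      Finset.filter_true_of_mem fun v _ => hcon v
    rw [h] at hc1; linarith
  have hhigh : ∃ v, c ≤ x v := by
    by_contra hcon
    push_neg at hcon
    have h : (Finset.univ.filter fun v => x v < c) = Finset.univ :=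
      Finset.filter_true_of_mem fun v _ => hcon v
    rw [h] at hc2; linarith
  obtain ⟨vlo, hvlo⟩ := hlow
  obtain ⟨vhi, hvhi⟩ := hhigh
  have hmc : (⨅ v, x v) ≤ c := (iInf_le_app x vlo).trans hvlo
  have hcM : c ≤ ⨆ v, x v := hvhi.trans (app_le_iSup x vhi)
  have hrightpt : ∀ t ∈ Set.Ioo c (⨆ v, x v),
      h2 * G.vol (SL x t) ≤ G.volB (SL x t) := by
    intro t ht
    rcases Finset.eq_empty_or_nonempty (SL x t) with he | hne
    · rw [he, G.volB_empty]
      simp [vol]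
    · have hnu : SL x t ≠ Finset.univ := by
        intro hu
        have hmem : vlo ∈ SL x t := hu ▸ Finset.mem_univ vlo
        simp only [SL, Finset.mem_filter] at hmem
        linarith [hmem.2, ht.1]
      have hsub : SL x t ⊆ Finset.univ.filter fun v => c < x v := by
        intro v hv
        simp only [SL, Finset.mem_filter] at hv ⊢
        exact ⟨Finset.mem_univ v, ht.1.trans hv.2⟩
      have h1 : G.vol (SL x t) ≤ G.vol Finset.univ / 2 := (G.vol_mono hsub).trans hc1
      have h2' : G.vol (SL x t) ≤ G.vol ((SL x t)ᶜ) := by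
        rw [G.vol_compl]; linarith
      have hh := h2le (SL x t) hne hnu
      rwa [min_eq_left h2'] at hh
  have hleftpt : ∀ t ∈ Set.Ioo (⨅ v, x v) c,
      h2 * G.vol ((SL x t)ᶜ) ≤ G.volB (SL x t) := by
    intro t ht
    have hne : (SL x t).Nonempty := by
      refine ⟨vhi, ?_⟩
      simp only [SL, Finset.mem_filter]
      exact ⟨Finset.mem_univ _, lt_of_lt_of_le ht.2 hvhi⟩
    have hnu : SL x t ≠ Finset.univ := by
      intro hu
      have hall : ∀ v, t < x v := by
        intro v
        have hmem : v ∈ SL x t := hu ▸ Finset.mem_univ v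
        simp only [SL, Finset.mem_filter] at hmem
        exact hmem.2
      have : t ≤ ⨅ v, x v := le_ciInf fun v => (hall v).le
      linarith [ht.1]
    have hsub : (SL x t)ᶜ ⊆ Finset.univ.filter fun v => x v < c := by
      intro v hv
      simp only [SL, Finset.mem_compl, Finset.mem_filter, Finset.mem_univ, true_and,
        not_lt] at hv
      simp only [Finset.mem_filter, Finset.mem_univ, true_and]
      exact lt_of_le_of_lt hv ht.2
    have h1 : G.vol ((SL x t)ᶜ) ≤ G.vol Finset.univ / 2 := (G.vol_mono hsub).trans hc2
    have h2' : G.vol ((SL x t)ᶜ) ≤ G.vol (SL x t) := by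
      have hcc := G.vol_compl (SL x t); linarith
    have hh := h2le (SL x t) hne hnu
    rwa [min_eq_right h2'] at hh
  have intB : ∀ a b : ℝ, IntervalIntegrable (fun t => G.volB (SL x t)) volume a b :=
    fun a b => SL_intervalIntegrable G.volB x a b
  have intv : ∀ a b : ℝ, IntervalIntegrable (fun t => h2 * G.vol (SL x t)) volume a b :=
    fun a b => SL_intervalIntegrable (fun S => h2 * G.vol S) x a b
  have intvc : ∀ a b : ℝ,
      IntervalIntegrable (fun t => h2 * G.vol ((SL x t)ᶜ)) volume a b :=
    fun a b => SL_intervalIntegrable (fun S => h2 * G.vol Sᶜ) x a b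
  have hsplit : G.Q 1 x
      = (∫ t in (⨅ v, x v)..c, G.volB (SL x t))
        + ∫ t in c..(⨆ v, x v), G.volB (SL x t) := by
    rw [G.Q_eq_integral x,
      ← intervalIntegral.integral_add_adjacent_intervals (intB _ c) (intB c _)]
  have hright : h2 * ∑ v, G.μ v * max (x v - c) 0
      ≤ ∫ t in c..(⨆ v, x v), G.volB (SL x t) := by
    have hmono := integral_mono_Ioo hcM (intv c _) (intB c _) hrightpt
    have hval : (∫ t in c..(⨆ v, x v), h2 * G.vol (SL x t))
        = h2 * ∑ v, G.μ v * max (x v - c) 0 := by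
      rw [intervalIntegral.integral_const_mul]
      congr 1
      rw [intervalIntegral.integral_congr (g := fun t => ∑ v, if t < x v then G.μ v else 0)
        (fun t _ => G.vol_SL_eq x t)]
      rw [intervalIntegral.integral_finset_sum
        (fun v _ => indicator_lt_intervalIntegrable (x v) (G.μ v) c _)]
      exact Finset.sum_congr rfl fun v _ =>
        integral_indicator_lt hcM (app_le_iSup x v)
    linarith
  have hleft : h2 * ∑ v, G.μ v * max (c - x v) 0
      ≤ ∫ t in (⨅ v, x v)..c, G.volB (SL x t) := by
    have hmono := integral_mono_Ioo hmc (intvc _ c) (intB _ c) hleftpt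
    have hval : (∫ t in (⨅ v, x v)..c, h2 * G.vol ((SL x t)ᶜ))
        = h2 * ∑ v, G.μ v * max (c - x v) 0 := by
      rw [intervalIntegral.integral_const_mul]
      congr 1
      rw [intervalIntegral.integral_congr (g := fun t => ∑ v, if x v ≤ t then G.μ v else 0)
        (fun t _ => G.vol_SL_compl_eq x t)]
      rw [intervalIntegral.integral_finset_sum
        (fun v _ => indicator_le_intervalIntegrable (x v) (G.μ v) _ c)]
      exact Finset.sum_congr rfl fun v _ =>
        integral_indicator_le hmc (iInf_le_app x v)
    linarith
  have hsum : ∑ v, G.μ v * |x v - c|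
      = (∑ v, G.μ v * max (x v - c) 0) + ∑ v, G.μ v * max (c - x v) 0 := by
    rw [← Finset.sum_add_distrib]
    exact Finset.sum_congr rfl fun v _ => by rw [abs_sub_eq_maxes]; ring
  rw [hsum, hsplit]
  rw [mul_add]
  linarith

lemma exists_median [Nonempty (Fin N)] (x : Fin N → ℝ) :
    ∃ c : ℝ, G.vol (Finset.univ.filter fun v => c < x v) ≤ G.vol Finset.univ / 2 ∧
      G.vol (Finset.univ.filter fun v => x v < c) ≤ G.vol Finset.univ / 2 := by
  classical
  have hVpos : 0 < G.vol Finset.univ := G.vol_pos Finset.univ_nonempty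
  set img := Finset.univ.image x with himg
  have himgne : img.Nonempty :=
    ⟨x (Classical.arbitrary _), Finset.mem_image_of_mem x (Finset.mem_univ _)⟩
  set T := img.filter
    (fun a => G.vol (Finset.univ.filter fun v => a < x v) ≤ G.vol Finset.univ / 2) with hT
  have hmaxT : img.max' himgne ∈ T := by
    refine Finset.mem_filter.2 ⟨Finset.max'_mem _ _, ?_⟩
    have hempty : (Finset.univ.filter fun v => img.max' himgne < x v) = ∅ := by
      refine Finset.filter_eq_empty_iff.2 fun v _ => not_lt.2 ?_
      exact Finset.le_max' _ _ (Finset.mem_image_of_mem x (Finset.mem_univ v))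
    rw [hempty]
    have hz : G.vol ∅ = 0 := by simp [vol]
    rw [hz]
    linarith
  have hTne : T.Nonempty := ⟨_, hmaxT⟩
  set c := T.min' hTne with hc
  have hcT : c ∈ T := Finset.min'_mem _ _
  refine ⟨c, (Finset.mem_filter.1 hcT).2, ?_⟩
  set W := Finset.univ.filter (fun v => x v < c) with hW
  have hWmem : ∀ u, u ∈ W ↔ x u < c := by
    intro u; rw [hW, Finset.mem_filter]; simp
  rcases Finset.eq_empty_or_nonempty W with hWe | hWne
  · rw [hWe]
    have hz : G.vol ∅ = 0 := by simp [vol]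
    rw [hz]; linarith
  · obtain ⟨v₁, hv₁W, hv₁max⟩ := Finset.exists_max_image W x hWne
    have hv₁lt : x v₁ < c := (hWmem v₁).1 hv₁W
    have haimg : x v₁ ∈ img := Finset.mem_image_of_mem x (Finset.mem_univ v₁)
    have hanotT : x v₁ ∉ T := by
      intro hmem
      exact absurd (Finset.min'_le T _ hmem) (not_le.2 hv₁lt)
    have hgt : ¬ (G.vol (Finset.univ.filter fun v => x v₁ < x v)
        ≤ G.vol Finset.univ / 2) := by
      intro hle; exact hanotT (Finset.mem_filter.2 ⟨haimg, hle⟩)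
    push_neg at hgt
    have hset : (Finset.univ.filter fun v => x v₁ < x v) = Wᶜ := by
      ext v
      simp only [Finset.mem_filter, Finset.mem_univ, true_and, Finset.mem_compl]
      constructor
      · intro h hvW
        exact absurd (hv₁max v hvW) (not_le.2 h)
      · intro h
        have hcle : c ≤ x v := not_lt.1 (fun hh => h ((hWmem v).2 hh))
        exact lt_of_lt_of_le hv₁lt hcle
    rw [hset] at hgt
    have hcc := G.vol_compl W
    linarith

lemma fe_const [Nonempty (Fin N)] {x : Fin N → ℝ} {α : ℝ} (hx : ∀ v, x v = α)
    (e : Finset (Fin N)) : G.fe e x = 0 := by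
  have h1 : (⨅ v, x v) = α :=
    le_antisymm ((iInf_le_app x (Classical.arbitrary _)).trans_eq (hx _))
      (le_ciInf fun v => (hx v).ge)
  have h2 : (⨆ v, x v) = α :=
    le_antisymm (ciSup_le fun v => (hx v).le)
      ((hx (Classical.arbitrary _)).ge.trans (app_le_iSup x _))
  rw [fe_eq, h1, h2, intervalIntegral.integral_same]

lemma fe_pattern [Nonempty (Fin N)] {e S : Finset (Fin N)} (he : e ∈ G.E)
    (hS : S.Nonempty) (hS' : S ≠ Finset.univ) {α β : ℝ} (hβα : β < α)
    {x : Fin N → ℝ} (hx : ∀ v, x v = if v ∈ S then α else β) :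
    G.fe e x = (α - β) * G.w e S := by
  obtain ⟨u0, hu0⟩ := hS
  obtain ⟨v0, hv0⟩ := exists_not_mem_of_ne_univ hS'
  have hxu0 : x u0 = α := by rw [hx u0, if_pos hu0]
  have hxv0 : x v0 = β := by rw [hx v0, if_neg hv0]
  have hiSup : (⨆ v, x v) = α := by
    refine le_antisymm (ciSup_le fun v => ?_) (hxu0 ▸ app_le_iSup x u0)
    rw [hx v]
    by_cases h : v ∈ S
    · simp [h]
    · simp [h, hβα.le]
  have hiInf : (⨅ v, x v) = β := by
    refine le_antisymm (hxv0 ▸ iInf_le_app x v0) (le_ciInf fun v => ?_)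
    rw [hx v]
    by_cases h : v ∈ S
    · simp [h, hβα.le]
    · simp [h]
  rw [fe_eq, hiInf, hiSup]
  refine integral_eq_of_eqOn_Ioo hβα.le (k := G.w e S) (fun t ht => ?_)
  congr 1
  ext v
  simp only [SL, Finset.mem_filter, Finset.mem_univ, true_and, hx v]
  by_cases hv : v ∈ S
  · simp [hv, ht.2]
  · simp [hv, not_lt.2 ht.1.le]

lemma Q_pattern [Nonempty (Fin N)] {S : Finset (Fin N)}
    (hS : S.Nonempty) (hS' : S ≠ Finset.univ) {α β : ℝ} (hβα : β < α)
    {x : Fin N → ℝ} (hx : ∀ v, x v = if v ∈ S then α else β) :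
    G.Q 1 x = (α - β) * G.volB S := by
  rw [Q_one, Finset.sum_congr rfl (fun e he => by rw [G.fe_pattern he hS hS' hβα hx])]
  unfold volB
  rw [Finset.mul_sum]
  exact Finset.sum_congr rfl fun e _ => by ring

lemma Z_ind [Nonempty (Fin N)] (S : Finset (Fin N)) :
    G.Z 1 (fun v => if v ∈ S then (1:ℝ) else 0) = min (G.vol S) (G.vol Sᶜ) := by
  have hval : ∀ c : ℝ, ∑ v, G.μ v * |(if v ∈ S then (1:ℝ) else 0) - c|
      = G.vol S * |1 - c| + G.vol Sᶜ * |c| := by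
    intro c
    rw [← Finset.sum_add_sum_compl S (fun v => G.μ v * |(if v ∈ S then (1:ℝ) else 0) - c|)]
    congr 1
    · rw [Finset.sum_congr rfl (fun v hv => by rw [if_pos hv]), ← Finset.sum_mul]
      rfl
    · rw [Finset.sum_congr rfl
        (fun v hv => by rw [if_neg (Finset.mem_compl.1 hv), zero_sub, abs_neg]),
        ← Finset.sum_mul]
      rfl
  rw [Z_one, iInf_congr hval]
  have hbdd : BddBelow (Set.range fun c : ℝ => G.vol S * |1 - c| + G.vol Sᶜ * |c|) := by
    refine ⟨0, ?_⟩
    rintro y ⟨d, rfl⟩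
    have := G.vol_nonneg S
    have := G.vol_nonneg Sᶜ
    positivity
  refine le_antisymm (le_min ?_ ?_) (le_ciInf fun c => ?_)
  · have h0 := ciInf_le hbdd (0:ℝ)
    simpa using h0
  · have h1 := ciInf_le hbdd (1:ℝ)
    simpa using h1
  · have h1c : (1:ℝ) ≤ |1 - c| + |c| := by
      have habs := abs_add_le (1 - c) c
      simp only [sub_add_cancel] at habs
      simpa using habs
    have hmnn : 0 ≤ min (G.vol S) (G.vol Sᶜ) := le_min (G.vol_nonneg S) (G.vol_nonneg Sᶜ)
    calc min (G.vol S) (G.vol Sᶜ) = min (G.vol S) (G.vol Sᶜ) * 1 := (mul_one _).symm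
      _ ≤ min (G.vol S) (G.vol Sᶜ) * (|1 - c| + |c|) :=
          mul_le_mul_of_nonneg_left h1c hmnn
      _ = min (G.vol S) (G.vol Sᶜ) * |1 - c| + min (G.vol S) (G.vol Sᶜ) * |c| := mul_add _ _ _
      _ ≤ G.vol S * |1 - c| + G.vol Sᶜ * |c| :=
          add_le_add (mul_le_mul_of_nonneg_right (min_le_left _ _) (abs_nonneg _))
            (mul_le_mul_of_nonneg_right (min_le_right _ _) (abs_nonneg _))

lemma Rq_ind [Nonempty (Fin N)] {S : Finset (Fin N)}
    (hS : S.Nonempty) (hS' : S ≠ Finset.univ) :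
    G.Rq 1 (fun v => if v ∈ S then (1:ℝ) else 0) = G.conductance S := by
  unfold Rq conductance
  rw [G.Z_ind S, G.Q_pattern hS hS' one_pos (fun v => rfl)]
  norm_num

lemma Q_le_bound [Nonempty (Fin N)] {x : Fin N → ℝ} (hx : G.normLpPow 1 x = 1) :
    G.Q 1 x ≤ (∑ e ∈ G.E, G.θ e) * (2 * ⨆ v, (G.μ v)⁻¹) := by
  set K := ⨆ v, (G.μ v)⁻¹ with hK
  have habs : ∀ v, |x v| ≤ K := by
    intro v
    have h1 : G.μ v * |x v| ≤ 1 := by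
      rw [← hx, normLpPow_one]
      exact Finset.single_le_sum (f := fun v => G.μ v * |x v|)
        (fun v _ => mul_nonneg (G.μ_pos v).le (abs_nonneg _)) (Finset.mem_univ v)
    have hμ := G.μ_pos v
    have h2 : |x v| ≤ 1 / G.μ v := (le_div_iff₀ hμ).2 (by linarith [mul_comm (G.μ v) |x v|])
    rw [one_div] at h2
    have h3 := app_le_iSup (fun u => (G.μ u)⁻¹) v
    rw [← hK] at h3
    exact h2.trans h3
  have hM : (⨆ v, x v) ≤ K := ciSup_le fun v => (le_abs_self _).trans (habs v)
  have hm : -K ≤ (⨅ v, x v) :=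
    le_ciInf fun v => by linarith [neg_abs_le (x v), habs v]
  have hmM : (⨅ v, x v) ≤ (⨆ v, x v) :=
    (iInf_le_app x (Classical.arbitrary _)).trans (app_le_iSup x _)
  have hfe : ∀ e ∈ G.E, G.fe e x ≤ 2 * K := by
    intro e he
    rw [fe_eq]
    calc (∫ t in (⨅ v, x v)..(⨆ v, x v), G.w e (SL x t))
        ≤ ∫ _t in (⨅ v, x v)..(⨆ v, x v), (1:ℝ) :=
          integral_mono_Ioo hmM (SL_intervalIntegrable _ x _ _)
            intervalIntegrable_const (fun t _ => G.w_le_one e he _)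
      _ = (⨆ v, x v) - (⨅ v, x v) := by
          rw [intervalIntegral.integral_const, smul_eq_mul, mul_one]
      _ ≤ 2 * K := by linarith
  rw [Q_one, Finset.sum_mul]
  refine Finset.sum_le_sum fun e he => ?_
  exact mul_le_mul_of_nonneg_left (hfe e he) (G.θ_pos e he).le

end SubmodularHypergraph

namespace Stmt14

open Set

lemma genus_le_of {N : ℕ} {A : Set (Fin N → ℝ)} {k : ℕ} (h : genusLE A k) :
    genus A ≤ (k : ℕ∞) :=
  sInf_le ⟨k, h, rfl⟩

lemma genus_empty {N : ℕ} : genus (∅ : Set (Fin N → ℝ)) = 0 := by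
  refine le_antisymm ?_ zero_le
  exact_mod_cast genus_le_of (k := 0)
    ⟨fun _ _ => 0, continuousOn_empty _, fun x hx => hx.elim, fun x hx => hx.elim⟩

lemma two_le_genus {N : ℕ} {A : Set (Fin N → ℝ)}
    (h0 : ¬ genusLE A 0) (h1 : ¬ genusLE A 1) : (2 : ℕ∞) ≤ genus A := by
  refine le_sInf ?_
  rintro b ⟨n, hn, rfl⟩
  have hn2 : 2 ≤ n := by
    rcases n with _ | _ | n
    · exact absurd hn h0
    · exact absurd hn h1
    · omega
  show (2 : ℕ∞) ≤ (n : ℕ∞)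
  exact_mod_cast hn2

lemma not_genusLE_one {N : ℕ} {A : Set (Fin N → ℝ)} (h : (2 : ℕ∞) ≤ genus A) :
    ¬ genusLE A 1 := by
  intro h1
  have h2 := le_trans h (genus_le_of h1)
  norm_num at h2

lemma nonempty_of_two_le_genus {N : ℕ} {A : Set (Fin N → ℝ)}
    (h : (2 : ℕ∞) ≤ genus A) : A.Nonempty := by
  rcases A.eq_empty_or_nonempty with rfl | h'
  · rw [genus_empty] at h; norm_num at h
  · exact h'

end Stmt14

namespace SubmodularHypergraph

open MeasureTheory Set Stmt14

variable {N : ℕ} (G : SubmodularHypergraph N)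

/-- The "ℓ¹ circle" through `1_S` and `1_{Sᶜ}`, used to bound `λ₂` by `c(S)`. -/
def circSet (S : Finset (Fin N)) : Set (Fin N → ℝ) :=
  {x | (∀ u ∈ S, ∀ u' ∈ S, x u = x u') ∧
       (∀ u, u ∉ S → ∀ u', u' ∉ S → x u = x u') ∧ G.normLpPow 1 x = 1}

lemma continuous_normL1 : Continuous fun x : Fin N → ℝ => G.normLpPow 1 x := by
  have h : (fun x : Fin N → ℝ => G.normLpPow 1 x) = fun x => ∑ v, G.μ v * |x v| := by
    funext x; exact G.normLpPow_one x
  rw [h]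
  exact continuous_finset_sum _ fun v _ => continuous_const.mul (continuous_apply v).abs

lemma normLpPow_one_zero : G.normLpPow 1 (0 : Fin N → ℝ) = 0 := by
  rw [normLpPow_one]; simp

lemma circ_closed (S : Finset (Fin N)) : IsClosed (G.circSet S) := by
  have h1 : IsClosed {x : Fin N → ℝ | ∀ u ∈ S, ∀ u' ∈ S, x u = x u'} := by
    have he : {x : Fin N → ℝ | ∀ u ∈ S, ∀ u' ∈ S, x u = x u'}
        = ⋂ u ∈ S, ⋂ u' ∈ S, {x : Fin N → ℝ | x u = x u'} := by
      ext x; simp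
    rw [he]
    exact isClosed_biInter fun u _ => isClosed_biInter fun u' _ =>
      isClosed_eq (continuous_apply u) (continuous_apply u')
  have h2 : IsClosed {x : Fin N → ℝ | ∀ u, u ∉ S → ∀ u', u' ∉ S → x u = x u'} := by
    have he : {x : Fin N → ℝ | ∀ u, u ∉ S → ∀ u', u' ∉ S → x u = x u'}
        = ⋂ u, ⋂ (_ : u ∉ S), ⋂ u', ⋂ (_ : u' ∉ S), {x : Fin N → ℝ | x u = x u'} := by
      ext x; simp
    rw [he]
    exact isClosed_iInter fun u => isClosed_iInter fun _ =>
      isClosed_iInter fun u' => isClosed_iInter fun _ =>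
        isClosed_eq (continuous_apply u) (continuous_apply u')
  have h3 : IsClosed {x : Fin N → ℝ | G.normLpPow 1 x = 1} :=
    isClosed_eq G.continuous_normL1 continuous_const
  have he : G.circSet S = {x : Fin N → ℝ | ∀ u ∈ S, ∀ u' ∈ S, x u = x u'}
      ∩ ({x : Fin N → ℝ | ∀ u, u ∉ S → ∀ u', u' ∉ S → x u = x u'}
        ∩ {x : Fin N → ℝ | G.normLpPow 1 x = 1}) := by
    ext x; simp [circSet, and_assoc]
  rw [he]
  exact h1.inter (h2.inter h3)

lemma circ_symm {S : Finset (Fin N)} {x : Fin N → ℝ} (hx : x ∈ G.circSet S) :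
    -x ∈ G.circSet S := by
  obtain ⟨h1, h2, h3⟩ := hx
  refine ⟨fun u hu u' hu' => by simp [h1 u hu u' hu'],
    fun u hu u' hu' => by simp [h2 u hu u' hu'], ?_⟩
  rw [normLpPow_one] at h3 ⊢
  simpa [abs_neg] using h3

lemma normL1_two_val {S : Finset (Fin N)} {α β : ℝ} {x : Fin N → ℝ}
    (hx : ∀ v, x v = if v ∈ S then α else β) :
    ∑ v, G.μ v * |x v| = G.vol S * |α| + G.vol Sᶜ * |β| := by
  rw [← Finset.sum_add_sum_compl S (fun v => G.μ v * |x v|)]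
  congr 1
  · rw [Finset.sum_congr rfl (fun v hv => by rw [hx v, if_pos hv]), ← Finset.sum_mul]; rfl
  · rw [Finset.sum_congr rfl (fun v hv => by rw [hx v, if_neg (Finset.mem_compl.1 hv)]),
      ← Finset.sum_mul]; rfl

lemma Q_circ_le [Nonempty (Fin N)] {S : Finset (Fin N)}
    (hS : S.Nonempty) (hS' : S ≠ Finset.univ)
    {x : Fin N → ℝ} (hx : x ∈ G.circSet S) : G.Q 1 x ≤ G.conductance S := by
  obtain ⟨u0, hu0⟩ := hS
  obtain ⟨v0, hv0⟩ := exists_not_mem_of_ne_univ hS'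
  obtain ⟨hcs, hcc, hn⟩ := hx
  set α := x u0 with hα
  set β := x v0 with hβ
  have hxv : ∀ v, x v = if v ∈ S then α else β := by
    intro v; by_cases h : v ∈ S
    · rw [if_pos h]; exact hcs v h u0 hu0
    · rw [if_neg h]; exact hcc v h v0 hv0
  have hnorm : G.vol S * |α| + G.vol Sᶜ * |β| = 1 := by
    rw [← G.normL1_two_val hxv, ← normLpPow_one]; exact hn
  have hminpos : 0 < min (G.vol S) (G.vol Sᶜ) :=
    lt_min (G.vol_pos ⟨u0, hu0⟩) (G.vol_pos ⟨v0, Finset.mem_compl.2 hv0⟩)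
  have habs_le : |α| + |β| ≤ 1 / min (G.vol S) (G.vol Sᶜ) := by
    rw [le_div_iff₀ hminpos]
    calc (|α| + |β|) * min (G.vol S) (G.vol Sᶜ)
        ≤ G.vol S * |α| + G.vol Sᶜ * |β| := by
          rw [add_mul]
          exact add_le_add
            (by rw [mul_comm]; exact mul_le_mul_of_nonneg_right (min_le_left _ _) (abs_nonneg _))
            (by rw [mul_comm]; exact mul_le_mul_of_nonneg_right (min_le_right _ _) (abs_nonneg _))
      _ = 1 := hnorm
  have hcond : G.conductance S = G.volB S / min (G.vol S) (G.vol Sᶜ) := rfl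
  rcases lt_trichotomy β α with h | h | h
  · rw [G.Q_pattern ⟨u0, hu0⟩ hS' h hxv]
    have hd : α - β ≤ 1 / min (G.vol S) (G.vol Sᶜ) := by
      have := le_abs_self α
      have := neg_abs_le β
      linarith
    calc (α - β) * G.volB S ≤ (1 / min (G.vol S) (G.vol Sᶜ)) * G.volB S :=
          mul_le_mul_of_nonneg_right hd (G.volB_nonneg S)
      _ = G.conductance S := by rw [hcond]; ring
  · have hconst : ∀ v, x v = α := by
      intro v; rw [hxv v]; by_cases hv : v ∈ S
      · simp [hv]
      · simp [hv, h]
    have hQ0 : G.Q 1 x = 0 := by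
      rw [Q_one]
      exact Finset.sum_eq_zero fun e _ => by rw [G.fe_const hconst e, mul_zero]
    rw [hQ0]
    exact G.conductance_nonneg S
  · have hSc_ne : Sᶜ ≠ Finset.univ := by
      intro hEq
      have hmem : u0 ∈ Sᶜ := hEq ▸ Finset.mem_univ u0
      exact (Finset.mem_compl.1 hmem) hu0
    have hxv' : ∀ v, x v = if v ∈ Sᶜ then β else α := by
      intro v
      rw [hxv v]
      by_cases hv : v ∈ S <;> simp [hv, Finset.mem_compl]
    rw [G.Q_pattern ⟨v0, Finset.mem_compl.2 hv0⟩ hSc_ne h hxv', G.volB_compl]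
    have hd : β - α ≤ 1 / min (G.vol S) (G.vol Sᶜ) := by
      have := le_abs_self β
      have := neg_abs_le α
      linarith
    calc (β - α) * G.volB S ≤ (1 / min (G.vol S) (G.vol Sᶜ)) * G.volB S :=
          mul_le_mul_of_nonneg_right hd (G.volB_nonneg S)
      _ = G.conductance S := by rw [hcond]; ring

lemma two_le_genus_circ [Nonempty (Fin N)] {S : Finset (Fin N)}
    (hS : S.Nonempty) (hS' : S ≠ Finset.univ) : (2 : ℕ∞) ≤ genus (G.circSet S) := by
  obtain ⟨u0, hu0⟩ := hS
  obtain ⟨v0, hv0⟩ := exists_not_mem_of_ne_univ hS'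
  have ha : 0 < G.vol S := G.vol_pos ⟨u0, hu0⟩
  have hb : 0 < G.vol Sᶜ := G.vol_pos ⟨v0, Finset.mem_compl.2 hv0⟩
  set a := G.vol S with hadef
  set b := G.vol Sᶜ with hbdef
  set γ : ℝ → (Fin N → ℝ) :=
    fun t v => if v ∈ S then (1 - 2*t)/a else (1 - |1 - 2*t|)/b with hγ
  have hγmem : ∀ t ∈ Set.Icc (0:ℝ) 1, γ t ∈ G.circSet S := by
    intro t ht
    have habs1 : |1 - 2*t| ≤ 1 := abs_le.2 ⟨by linarith [ht.1, ht.2], by linarith [ht.1]⟩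
    refine ⟨fun u hu u' hu' => by simp [hγ, hu, hu'],
      fun u hu u' hu' => by simp [hγ, hu, hu'], ?_⟩
    rw [normLpPow_one, G.normL1_two_val (fun v => rfl)]
    rw [← hadef, ← hbdef]
    have h1 : a * |(1 - 2*t)/a| = |1 - 2*t| := by
      rw [abs_div, abs_of_pos ha, mul_div_cancel₀ _ ha.ne']
    have h2 : b * |(1 - |1 - 2*t|)/b| = 1 - |1 - 2*t| := by
      rw [abs_div, abs_of_pos hb, abs_of_nonneg (by linarith), mul_div_cancel₀ _ hb.ne']
    rw [h1, h2]
    ring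
  have hγcont : Continuous γ := by
    refine continuous_pi fun v => ?_
    by_cases h : v ∈ S <;> simp only [hγ, h, if_true, if_false] <;> fun_prop
  have hγ1 : γ 1 = -(γ 0) := by
    funext v
    by_cases h : v ∈ S
    · simp only [hγ, h, if_true, Pi.neg_apply]
      norm_num
      ring
    · simp only [hγ, h, if_false, Pi.neg_apply]
      norm_num
  refine two_le_genus ?_ ?_
  · rintro ⟨h, _, _, hnz⟩
    have hp := hγmem 0 ⟨le_refl 0, zero_le_one⟩
    exact hnz (γ 0) hp (funext fun i => i.elim0)
  · rintro ⟨h, hcont, hodd, hnz⟩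
    set H : ℝ → ℝ := fun t => h (γ t) 0 with hH
    have hHcont : ContinuousOn H (Set.Icc 0 1) := by
      have h1 : ContinuousOn (h ∘ γ) (Set.Icc (0:ℝ) 1) :=
        hcont.comp hγcont.continuousOn (fun t ht => hγmem t ht)
      exact ((continuous_apply (0 : Fin 1)).comp_continuousOn h1 : _)
    have hH1 : H 1 = - H 0 := by
      have := hodd (γ 0) (hγmem 0 ⟨le_refl 0, zero_le_one⟩)
      rw [hH]
      simp only [hγ1, this]
      rfl
    have hH0 : H 0 ≠ 0 := by
      intro h0
      refine hnz (γ 0) (hγmem 0 ⟨le_refl 0, zero_le_one⟩) (funext fun i => ?_)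
      have : i = 0 := Subsingleton.elim i 0
      rw [this]; exact h0
    have hzero : ∃ t ∈ Set.Icc (0:ℝ) 1, H t = 0 := by
      rcases lt_or_gt_of_ne hH0 with hlt | hgt
      · have hmem : (0:ℝ) ∈ Set.Icc (H 0) (H 1) := by
          rw [hH1]; constructor <;> linarith
        obtain ⟨t, ht, hHt⟩ := intermediate_value_Icc zero_le_one hHcont hmem
        exact ⟨t, ht, hHt⟩
      · have hmem : (0:ℝ) ∈ Set.Icc (H 1) (H 0) := by
          rw [hH1]; constructor <;> linarith
        obtain ⟨t, ht, hHt⟩ := intermediate_value_Icc' zero_le_one hHcont hmem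
        exact ⟨t, ht, hHt⟩
    obtain ⟨t, ht, hHt⟩ := hzero
    refine hnz (γ t) (hγmem t ht) (funext fun i => ?_)
    have : i = 0 := Subsingleton.elim i 0
    rw [this]; exact hHt

end SubmodularHypergraph

namespace SubmodularHypergraph

open MeasureTheory Set Stmt14

variable {N : ℕ} (G : SubmodularHypergraph N)

lemma exists_median_zero [Nonempty (Fin N)] {A : Set (Fin N → ℝ)}
    (hg : (2 : ℕ∞) ≤ genus A) :
    ∃ x ∈ A, G.vol (Finset.univ.filter fun v => 0 < x v) ≤ G.vol Finset.univ / 2 ∧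
      G.vol (Finset.univ.filter fun v => x v < 0) ≤ G.vol Finset.univ / 2 := by
  by_contra hcon
  push_neg at hcon
  have hdich : ∀ x ∈ A,
      G.vol Finset.univ / 2 < G.vol (Finset.univ.filter fun v => 0 < x v)
      ∨ G.vol Finset.univ / 2 < G.vol (Finset.univ.filter fun v => x v < 0) := by
    intro x hx
    by_cases h : G.vol (Finset.univ.filter fun v => 0 < x v) ≤ G.vol Finset.univ / 2
    · exact Or.inr (hcon x hx h)
    · exact Or.inl (not_le.1 h)
  have hsumle : ∀ x : Fin N → ℝ,
      G.vol (Finset.univ.filter fun v => 0 < x v)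
        + G.vol (Finset.univ.filter fun v => x v < 0) ≤ G.vol Finset.univ := by
    intro x
    have hdisj : Disjoint (Finset.univ.filter fun v => 0 < x v)
        (Finset.univ.filter fun v => x v < 0) := by
      rw [Finset.disjoint_left]
      intro v hv1 hv2
      simp only [Finset.mem_filter] at hv1 hv2
      linarith [hv1.2, hv2.2]
    have hu : G.vol ((Finset.univ.filter fun v => 0 < x v)
        ∪ Finset.univ.filter fun v => x v < 0)
        = G.vol (Finset.univ.filter fun v => 0 < x v)
          + G.vol (Finset.univ.filter fun v => x v < 0) :=
      Finset.sum_union hdisj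
    have hmono := G.vol_mono (Finset.subset_univ
      ((Finset.univ.filter fun v => 0 < x v) ∪ Finset.univ.filter fun v => x v < 0))
    linarith
  have hnegpos : ∀ x : Fin N → ℝ,
      (Finset.univ.filter fun v => 0 < (-x) v) = Finset.univ.filter fun v => x v < 0 := by
    intro x; ext v; simp [neg_pos]
  set h : (Fin N → ℝ) → (Fin 1 → ℝ) := fun x => fun _ =>
    if G.vol Finset.univ / 2 < G.vol (Finset.univ.filter fun v => 0 < x v)
    then 1 else -1 with hh
  have hgle : genusLE A 1 := by
    refine ⟨h, ?_, ?_, ?_⟩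
    · -- ContinuousOn
      intro x hx
      by_cases hcase : G.vol Finset.univ / 2
          < G.vol (Finset.univ.filter fun v => 0 < x v)
      · set U := {y : Fin N → ℝ | ∀ v ∈ Finset.univ.filter fun w => 0 < x w, 0 < y v}
          with hU
        have hUopen : IsOpen U := by
          have he : U = ⋂ v ∈ Finset.univ.filter fun w => 0 < x w,
              {y : Fin N → ℝ | 0 < y v} := by
            ext y; simp [hU]
          rw [he]
          exact isOpen_biInter_finset fun v _ =>
            isOpen_lt continuous_const (continuous_apply v)
        have hxU : x ∈ U := fun v hv => (Finset.mem_filter.1 hv).2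
        have hconst : ∀ y ∈ U, h y = h x := by
          intro y hy
          have hsub : (Finset.univ.filter fun w => 0 < x w)
              ⊆ Finset.univ.filter fun w => 0 < y w := fun v hv =>
            Finset.mem_filter.2 ⟨Finset.mem_univ v, hy v hv⟩
          have hy2 : G.vol Finset.univ / 2
              < G.vol (Finset.univ.filter fun w => 0 < y w) :=
            lt_of_lt_of_le hcase (G.vol_mono hsub)
          simp [hh, hy2, hcase]
        refine ContinuousWithinAt.congr_of_eventuallyEq
          (continuousWithinAt_const : ContinuousWithinAt (fun _ => h x) A x)
          ?_ (hconst x hxU)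
        exact Filter.eventually_of_mem
          (mem_nhdsWithin_of_mem_nhds (hUopen.mem_nhds hxU)) hconst
      · have hneg : G.vol Finset.univ / 2
            < G.vol (Finset.univ.filter fun v => x v < 0) :=
          (hdich x hx).resolve_left hcase
        set U := {y : Fin N → ℝ | ∀ v ∈ Finset.univ.filter fun w => x w < 0, y v < 0}
          with hU
        have hUopen : IsOpen U := by
          have he : U = ⋂ v ∈ Finset.univ.filter fun w => x w < 0,
              {y : Fin N → ℝ | y v < 0} := by
            ext y; simp [hU]
          rw [he]
          exact isOpen_biInter_finset fun v _ =>
            isOpen_lt (continuous_apply v) continuous_const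
        have hxU : x ∈ U := fun v hv => (Finset.mem_filter.1 hv).2
        have hconst : ∀ y ∈ U, h y = h x := by
          intro y hy
          have hsub : (Finset.univ.filter fun w => x w < 0)
              ⊆ Finset.univ.filter fun w => y w < 0 := fun v hv =>
            Finset.mem_filter.2 ⟨Finset.mem_univ v, hy v hv⟩
          have hy2 : G.vol Finset.univ / 2
              < G.vol (Finset.univ.filter fun w => y w < 0) :=
            lt_of_lt_of_le hneg (G.vol_mono hsub)
          have hy3 : ¬ (G.vol Finset.univ / 2
              < G.vol (Finset.univ.filter fun w => 0 < y w)) := by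
            have := hsumle y
            push_neg
            linarith
          simp [hh, hy3, hcase]
        refine ContinuousWithinAt.congr_of_eventuallyEq
          (continuousWithinAt_const : ContinuousWithinAt (fun _ => h x) A x)
          ?_ (hconst x hxU)
        exact Filter.eventually_of_mem
          (mem_nhdsWithin_of_mem_nhds (hUopen.mem_nhds hxU)) hconst
    · -- odd
      intro x hx
      rcases hdich x hx with hpos | hneg
      · have h1 : ¬ (G.vol Finset.univ / 2
            < G.vol (Finset.univ.filter fun v => x v < 0)) := by
          have := hsumle x
          push_neg
          linarith
        funext i
        simp [hh, neg_pos, h1, hpos]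
      · have h2 : ¬ (G.vol Finset.univ / 2
            < G.vol (Finset.univ.filter fun v => 0 < x v)) := by
          have := hsumle x
          push_neg
          linarith
        funext i
        simp [hh, neg_pos, hneg, h2]
    · -- nonvanishing
      intro x _ h0
      have := congrFun h0 0
      simp only [hh, Pi.zero_apply] at this
      split_ifs at this <;> norm_num at this
  have hle1 := genus_le_of hgle
  have hcontra := le_trans hg hle1
  norm_num at hcontra

end SubmodularHypergraph

/-- `λ₂^{(1)} = inf over nonconstant x of 𝓡₁(x)`, and this common value
equals the 2-way Cheeger constant `h₂ = min over nonempty proper S of c(S)`. -/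
theorem stmt14 {N : ℕ} (G : SubmodularHypergraph N) :
    G.varEigen 1 2 = sInf {r : ℝ | ∃ x : Fin N → ℝ, Nonconstant x ∧ r = G.Rq 1 x} ∧
    G.varEigen 1 2
      = sInf {c : ℝ | ∃ S : Finset (Fin N),
          S.Nonempty ∧ S ≠ Finset.univ ∧ c = G.conductance S} := by
  classical
  by_cases hN2 : 2 ≤ N
  · -- Main case `N ≥ 2`.
    haveI hFN : Nonempty (Fin N) := Fin.pos_iff_nonempty.1 (by omega)
    obtain ⟨S0, hS0ne, hS0nu⟩ : ∃ S0 : Finset (Fin N),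
        S0.Nonempty ∧ S0 ≠ Finset.univ := by
      refine ⟨{⟨0, by omega⟩}, ⟨_, Finset.mem_singleton_self _⟩, fun h => ?_⟩
      have hmem : (⟨1, by omega⟩ : Fin N) ∈ ({⟨0, by omega⟩} : Finset (Fin N)) :=
        h ▸ Finset.mem_univ _
      rw [Finset.mem_singleton] at hmem
      have h10 := congrArg Fin.val hmem
      simp at h10
    have hCSnonneg : ∀ c ∈ {c : ℝ | ∃ S : Finset (Fin N),
        S.Nonempty ∧ S ≠ Finset.univ ∧ c = G.conductance S}, (0:ℝ) ≤ c := by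
      rintro c ⟨S, _, _, rfl⟩; exact G.conductance_nonneg S
    have hCSne : {c : ℝ | ∃ S : Finset (Fin N),
        S.Nonempty ∧ S ≠ Finset.univ ∧ c = G.conductance S}.Nonempty :=
      ⟨G.conductance S0, S0, hS0ne, hS0nu, rfl⟩
    have hCSbdd : BddBelow {c : ℝ | ∃ S : Finset (Fin N),
        S.Nonempty ∧ S ≠ Finset.univ ∧ c = G.conductance S} := ⟨0, hCSnonneg⟩
    have h2nn : (0:ℝ) ≤ sInf {c : ℝ | ∃ S : Finset (Fin N),
        S.Nonempty ∧ S ≠ Finset.univ ∧ c = G.conductance S} :=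
      le_csInf hCSne hCSnonneg
    have h2le : ∀ S : Finset (Fin N), S.Nonempty → S ≠ Finset.univ →
        sInf {c : ℝ | ∃ S : Finset (Fin N),
          S.Nonempty ∧ S ≠ Finset.univ ∧ c = G.conductance S}
            * min (G.vol S) (G.vol Sᶜ) ≤ G.volB S := by
      intro S hSne hSnu
      obtain ⟨w, hw⟩ := Stmt14.exists_not_mem_of_ne_univ hSnu
      have hminpos : 0 < min (G.vol S) (G.vol Sᶜ) :=
        lt_min (G.vol_pos hSne) (G.vol_pos ⟨w, Finset.mem_compl.2 hw⟩)
      have hle : sInf {c : ℝ | ∃ S : Finset (Fin N),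
          S.Nonempty ∧ S ≠ Finset.univ ∧ c = G.conductance S} ≤ G.conductance S :=
        csInf_le hCSbdd ⟨S, hSne, hSnu, rfl⟩
      have hmul := mul_le_mul_of_nonneg_right hle hminpos.le
      have hcond : G.conductance S * min (G.vol S) (G.vol Sᶜ) = G.volB S := by
        show G.volB S / min (G.vol S) (G.vol Sᶜ) * min (G.vol S) (G.vol Sᶜ) = G.volB S
        exact div_mul_cancel₀ _ hminpos.ne'
      linarith
    have hkey : ∀ x : Fin N → ℝ,
        sInf {c : ℝ | ∃ S : Finset (Fin N),
          S.Nonempty ∧ S ≠ Finset.univ ∧ c = G.conductance S} * G.Z 1 x ≤ G.Q 1 x := by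
      intro x
      obtain ⟨c, hc1, hc2⟩ := G.exists_median x
      have h1 := G.coarea h2le x hc1 hc2
      have h2' := mul_le_mul_of_nonneg_left (G.Z_le x c) h2nn
      linarith
    have hindncx : ∀ S : Finset (Fin N), S.Nonempty → S ≠ Finset.univ →
        Nonconstant (fun v => if v ∈ S then (1:ℝ) else 0) := by
      rintro S ⟨u, hu⟩ hSnu
      obtain ⟨w, hw⟩ := Stmt14.exists_not_mem_of_ne_univ hSnu
      exact ⟨u, w, by simp [hu, hw]⟩
    have hRSnonneg : ∀ r ∈ {r : ℝ | ∃ x : Fin N → ℝ,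
        Nonconstant x ∧ r = G.Rq 1 x}, (0:ℝ) ≤ r := by
      rintro r ⟨x, hx, rfl⟩
      exact div_nonneg (G.Q_nonneg x) (G.Z_nonneg x)
    have hIeq : sInf {r : ℝ | ∃ x : Fin N → ℝ, Nonconstant x ∧ r = G.Rq 1 x}
        = sInf {c : ℝ | ∃ S : Finset (Fin N),
            S.Nonempty ∧ S ≠ Finset.univ ∧ c = G.conductance S} := by
      refine le_antisymm ?_ ?_
      · refine le_csInf hCSne ?_
        rintro c ⟨S, hSne, hSnu, rfl⟩
        exact csInf_le ⟨0, hRSnonneg⟩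
          ⟨_, hindncx S hSne hSnu, (G.Rq_ind hSne hSnu).symm⟩
      · refine le_csInf ⟨_, ⟨_, hindncx S0 hS0ne hS0nu, rfl⟩⟩ ?_
        rintro r ⟨x, hx, rfl⟩
        have hZ := G.Z_pos hx
        show sInf _ ≤ G.Q 1 x / G.Z 1 x
        rw [le_div_iff₀ hZ]
        exact hkey x
    have hveq : G.varEigen 1 2
        = sInf {c : ℝ | ∃ S : Finset (Fin N),
            S.Nonempty ∧ S ≠ Finset.univ ∧ c = G.conductance S} := by
      unfold SubmodularHypergraph.varEigen
      have hQim : ∀ y ∈ (fun A : Set (Fin N → ℝ) => sSup (G.Q 1 '' A)) ''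
          {A | IsClosed A ∧ (∀ x ∈ A, -x ∈ A) ∧ A ⊆ {x | G.normLpPow 1 x = 1}
            ∧ ((2:ℕ) : ℕ∞) ≤ genus A}, (0:ℝ) ≤ y := by
        rintro y ⟨A, _, rfl⟩
        exact Real.sSup_nonneg (by rintro q ⟨x, _, rfl⟩; exact G.Q_nonneg x)
      have hcircmem : ∀ S : Finset (Fin N), S.Nonempty → S ≠ Finset.univ →
          G.circSet S ∈ {A : Set (Fin N → ℝ) | IsClosed A ∧ (∀ x ∈ A, -x ∈ A)
            ∧ A ⊆ {x | G.normLpPow 1 x = 1} ∧ ((2:ℕ) : ℕ∞) ≤ genus A} := by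
        intro S hSne hSnu
        refine ⟨G.circ_closed S, fun x hx => G.circ_symm hx, fun x hx => hx.2.2, ?_⟩
        have hg := G.two_le_genus_circ hSne hSnu
        exact_mod_cast hg
      refine le_antisymm ?_ ?_
      · refine le_csInf hCSne ?_
        rintro c ⟨S, hSne, hSnu, rfl⟩
        have h1 : sInf ((fun A : Set (Fin N → ℝ) => sSup (G.Q 1 '' A)) ''
            {A | IsClosed A ∧ (∀ x ∈ A, -x ∈ A) ∧ A ⊆ {x | G.normLpPow 1 x = 1}
              ∧ ((2:ℕ) : ℕ∞) ≤ genus A}) ≤ sSup (G.Q 1 '' G.circSet S) :=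
          csInf_le ⟨0, hQim⟩ ⟨G.circSet S, hcircmem S hSne hSnu, rfl⟩
        refine h1.trans (Real.sSup_le ?_ (G.conductance_nonneg S))
        rintro q ⟨x, hx, rfl⟩
        exact G.Q_circ_le hSne hSnu hx
      · refine le_csInf ⟨_, ⟨G.circSet S0, hcircmem S0 hS0ne hS0nu, rfl⟩⟩ ?_
        rintro y ⟨A, ⟨hAcl, hAsym, hAsub, hAgen⟩, rfl⟩
        have hg2 : (2:ℕ∞) ≤ genus A := by exact_mod_cast hAgen
        obtain ⟨x0, hx0A, hm1, hm2⟩ := G.exists_median_zero hg2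
        have hx0s : G.normLpPow 1 x0 = 1 := hAsub hx0A
        have hQx0 : sInf {c : ℝ | ∃ S : Finset (Fin N),
            S.Nonempty ∧ S ≠ Finset.univ ∧ c = G.conductance S} ≤ G.Q 1 x0 := by
          have hco := G.coarea h2le x0 (c := 0) hm1 hm2
          have hsum : ∑ v, G.μ v * |x0 v - 0| = 1 := by
            rw [G.normLpPow_one] at hx0s
            simpa [sub_zero] using hx0s
          rw [hsum, mul_one] at hco
          exact hco
        have hbddA : BddAbove (G.Q 1 '' A) := by
          refine ⟨(∑ e ∈ G.E, G.θ e) * (2 * ⨆ v, (G.μ v)⁻¹), ?_⟩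
          rintro q ⟨x, hx, rfl⟩
          exact G.Q_le_bound (hAsub hx)
        exact hQx0.trans (le_csSup hbddA ⟨x0, hx0A, rfl⟩)
    exact ⟨hveq.trans hIeq.symm, hveq⟩
  · -- Degenerate case `N ≤ 1`.
    have hsub : ∀ u v : Fin N, u = v := by
      intro u v
      have hu := u.isLt
      have hv := v.isLt
      exact Fin.ext (by omega)
    have hRSempty : {r : ℝ | ∃ x : Fin N → ℝ, Nonconstant x ∧ r = G.Rq 1 x} = ∅ := by
      rw [Set.eq_empty_iff_forall_notMem]
      rintro r ⟨x, ⟨u, v, huv⟩, _⟩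
      exact huv (congrArg x (hsub u v))
    have hCSempty : {c : ℝ | ∃ S : Finset (Fin N),
        S.Nonempty ∧ S ≠ Finset.univ ∧ c = G.conductance S} = ∅ := by
      rw [Set.eq_empty_iff_forall_notMem]
      rintro c ⟨S, ⟨v, hv⟩, hSnu, _⟩
      exact hSnu (Finset.eq_univ_iff_forall.2 fun u => (hsub u v) ▸ hv)
    have hESempty : {A : Set (Fin N → ℝ) | IsClosed A ∧ (∀ x ∈ A, -x ∈ A) ∧
        A ⊆ {x | G.normLpPow 1 x = 1} ∧ ((2:ℕ) : ℕ∞) ≤ genus A} = ∅ := by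
      rw [Set.eq_empty_iff_forall_notMem]
      rintro A ⟨hAcl, hAsym, hAsub, hAgen⟩
      have hg2 : (2:ℕ∞) ≤ genus A := by exact_mod_cast hAgen
      have hgle : genusLE A 1 := by
        refine ⟨fun x _ => ∑ v, x v, ?_, ?_, ?_⟩
        · exact (continuous_pi fun _ =>
            continuous_finset_sum _ fun v _ => continuous_apply v).continuousOn
        · intro x _
          funext i
          simp
        · intro x hx h0
          have hs0 : ∑ v, x v = 0 := by
            have hc := congrFun h0 0
            simpa using hc
          have hx0 : x = 0 := by
            funext v
            have huniv : ({v} : Finset (Fin N)) = Finset.univ :=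
              Finset.eq_univ_iff_forall.2 fun u => Finset.mem_singleton.2 (hsub u v)
            have hv : ∑ u, x u = x v := by rw [← huniv, Finset.sum_singleton]
            rw [hv] at hs0
            simpa using hs0
          have hsph : G.normLpPow 1 x = 1 := hAsub hx
          rw [hx0, G.normLpPow_one_zero] at hsph
          norm_num at hsph
      exact Stmt14.not_genusLE_one hg2 hgle
    constructor
    · unfold SubmodularHypergraph.varEigen
      rw [hESempty, Set.image_empty, Real.sInf_empty, hRSempty, Real.sInf_empty]
    · unfold SubmodularHypergraph.varEigen
      rw [hESempty, Set.image_empty, Real.sInf_empty, hCSempty, Real.sInf_empty]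
end
end

section
/- Let V = [N] with positive vertex weights μ_v > 0 and vol(S) = Σ_{v∈S} μ_v. For every x ∈ ℝ^N, the Lovász extension of the set function S ↦ min{vol(S), vol(V∖S)} evaluated at x equals min_{c∈ℝ} ‖x − c·𝟙‖_{ℓ1,μ}. Explicitly, if x_{i_1} ≥ x_{i_2} ≥ … ≥ x_{i_N} is a nonincreasing ordering of the entries of x and k* = min{k : Σ_{j≤k} μ_{i_j} ≥ Σ_{j>k} μ_{i_j}}, then Σ_{k=1}^{N−1} min{Σ_{j≤k} μ_{i_j}, Σ_{j>k} μ_{i_j}} (x_{i_k} − x_{i_{k+1}}) = ‖x − x_{i_{k*}}·𝟙‖_{ℓ1,μ} = min_{c∈ℝ} ‖x − c·𝟙‖_{ℓ1,μ}. -/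
open scoped BigOperators
open Finset

noncomputable section

lemma sum_split' (g : ℕ → ℝ) {k n : ℕ} (hk : k ≤ n + 1) :
    ∑ j ∈ Finset.range (n+1), g j = ∑ j ∈ Finset.range k, g j + ∑ j ∈ Finset.Icc k n, g j := by
  rw [← Finset.Ico_add_one_right_eq_Icc k n, Finset.range_eq_Ico, Finset.range_eq_Ico]
  exact (Finset.sum_Ico_consecutive g (Nat.zero_le k) hk).symm

lemma abel1' (g a : ℕ → ℝ) (m : ℕ) :
    ∑ k ∈ Finset.range m, (∑ j ∈ Finset.range (k+1), g j) * (a k - a (k+1))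
      = ∑ j ∈ Finset.range m, g j * (a j - a m) := by
  induction m with
  | zero => simp
  | succ m ih =>
    rw [Finset.sum_range_succ, ih, Finset.sum_range_succ]
    have h : ∀ j, g j * (a j - a (m+1)) = g j * (a j - a m) + g j * (a m - a (m+1)) := by
      intro j; ring
    simp_rw [h, Finset.sum_add_distrib, ← Finset.sum_mul]
    simp only [Finset.sum_range_succ]
    ring

lemma telescope' (a : ℕ → ℝ) {m n : ℕ} (h : m ≤ n) :
    ∑ k ∈ Finset.Ico m n, (a k - a (k+1)) = a m - a n := by
  rw [Finset.sum_Ico_eq_sub _ h, Finset.sum_range_sub' a, Finset.sum_range_sub' a]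
  ring

lemma abel2' (g a : ℕ → ℝ) (m n : ℕ) (h : m ≤ n) :
    ∑ k ∈ Finset.Ico m n, (∑ j ∈ Finset.Icc (k+1) n, g j) * (a k - a (k+1))
      = ∑ j ∈ Finset.Icc (m+1) n, g j * (a m - a j) := by
  induction n, h using Nat.le_induction with
  | base => simp
  | succ n hmn ih =>
    have h1 : ∀ k ∈ Finset.Ico m n,
        (∑ j ∈ Finset.Icc (k+1) (n+1), g j) * (a k - a (k+1))
        = (∑ j ∈ Finset.Icc (k+1) n, g j) * (a k - a (k+1)) + g (n+1) * (a k - a (k+1)) := by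
      intro k hk
      rw [Finset.mem_Ico] at hk
      rw [Finset.sum_Icc_succ_top (by omega : k + 1 ≤ n + 1)]
      ring
    rw [Finset.sum_Ico_succ_top (by omega : m ≤ n), Finset.sum_congr rfl h1,
      Finset.sum_add_distrib, ih, ← Finset.mul_sum, telescope' a hmn,
      Finset.sum_Icc_succ_top (by omega : m + 1 ≤ n + 1)]
    simp only [Finset.Icc_self, Finset.sum_singleton]
    ring

open MeasureTheory in
lemma ae_const_on (f : ℝ → ℝ) (p q c : ℝ) (h : ∀ t ∈ Set.Ioo p q, f t = c) :
    ∀ᵐ t ∂(volume : Measure ℝ), t ∈ Set.Ioc p q → f t = c := by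
  refine MeasureTheory.ae_iff.mpr (measure_mono_null (fun t ht => ?_) (Real.volume_singleton (a := q)))
  simp only [Set.mem_setOf_eq, not_forall] at ht
  obtain ⟨ht1, ht2⟩ := ht
  have hno : t ∉ Set.Ioo p q := fun hm => ht2 (h t hm)
  simp only [Set.mem_Ioc] at ht1
  simp only [Set.mem_Ioo, not_and, not_lt] at hno
  exact Set.mem_singleton_iff.mpr (le_antisymm ht1.2 (hno ht1.1))

open MeasureTheory in
lemma II_const_on (f : ℝ → ℝ) (p q c : ℝ) (hpq : p ≤ q) (h : ∀ t ∈ Set.Ioo p q, f t = c) :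
    IntervalIntegrable f volume p q := by
  rw [intervalIntegrable_iff, Set.uIoc_of_le hpq]
  have heq : (fun _ : ℝ => c) =ᵐ[volume.restrict (Set.Ioc p q)] f := by
    rw [Filter.EventuallyEq, MeasureTheory.ae_restrict_iff' measurableSet_Ioc]
    exact (ae_const_on f p q c h).mono (fun t ht hm => (ht hm).symm)
  exact (integrableOn_const measure_Ioc_lt_top.ne).congr heq

open MeasureTheory in
lemma integral_const_on (f : ℝ → ℝ) (p q c : ℝ) (hpq : p ≤ q) (h : ∀ t ∈ Set.Ioo p q, f t = c) :
    ∫ t in p..q, f t = c * (q - p) := by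
  rw [intervalIntegral.integral_of_le hpq,
    MeasureTheory.setIntegral_congr_ae measurableSet_Ioc (ae_const_on f p q c h),
    MeasureTheory.setIntegral_const, Real.volume_real_Ioc_of_le hpq,
    smul_eq_mul, mul_comm]

open Fin.NatCast

/-- On `V = [N+1]` with positive vertex weights `μ`, the Lovász
extension of `S ↦ min{vol(S), vol(V∖S)}` at `x` is `min_c ‖x − c·𝟙‖_{ℓ1,μ}`; explicitly,
for a nonincreasing ordering `x_{i_0} ≥ … ≥ x_{i_N}` (0-indexed) and the least `k*` with
`Σ_{j≤k*} μ_{i_j} ≥ Σ_{j>k*} μ_{i_j}`, the sorted-sum expression equals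
`‖x − x_{i_{k*}}·𝟙‖_{ℓ1,μ} = min_c ‖x − c·𝟙‖_{ℓ1,μ}`. -/
theorem stmt15 {N : ℕ} (μ : Fin (N + 1) → ℝ) (hμ : ∀ v, 0 < μ v)
    (x : Fin (N + 1) → ℝ) (i : Equiv.Perm (Fin (N + 1)))
    (hsort : ∀ j k : Fin (N + 1), j ≤ k → x (i k) ≤ x (i j))
    (kstar : ℕ)
    (hkstar : IsLeast {k : ℕ | k < N + 1 ∧
        (∑ j ∈ Finset.Icc (k + 1) N, μ (i (j : Fin (N + 1))))
          ≤ ∑ j ∈ Finset.range (k + 1), μ (i (j : Fin (N + 1)))} kstar) :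
    (lovasz (fun S : Finset (Fin (N + 1)) => min (∑ v ∈ S, μ v) (∑ v ∈ Sᶜ, μ v)) x
        = ⨅ c : ℝ, ∑ v, μ v * |x v - c|) ∧
    ((∑ k ∈ Finset.range N,
        min (∑ j ∈ Finset.range (k + 1), μ (i (j : Fin (N + 1))))
            (∑ j ∈ Finset.Icc (k + 1) N, μ (i (j : Fin (N + 1))))
          * (x (i (k : Fin (N + 1))) - x (i ((k + 1 : ℕ) : Fin (N + 1)))))
        = ∑ v, μ v * |x v - x (i (kstar : Fin (N + 1)))|) ∧
    ((∑ v, μ v * |x v - x (i (kstar : Fin (N + 1)))|)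
        = ⨅ c : ℝ, ∑ v, μ v * |x v - c|) := by
  classical
  -- abbreviations
  have hg : ∀ j : ℕ, (0:ℝ) < μ (i (j : Fin (N+1))) := fun j => hμ _
  have hkN : kstar ≤ N := by have := hkstar.1.1; omega
  have hmem := hkstar.1.2
  have ha : ∀ j k : ℕ, j ≤ k → k ≤ N →
      x (i (k : Fin (N+1))) ≤ x (i (j : Fin (N+1))) := by
    intro j k hjk hk
    refine hsort _ _ ?_
    rw [Fin.le_def, Fin.val_cast_of_lt (by omega), Fin.val_cast_of_lt (by omega)]
    exact hjk
  have reindex : ∀ F : Fin (N+1) → ℝ,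
      ∑ v, F v = ∑ j ∈ Finset.range (N+1), F (i (j : Fin (N+1))) := by
    intro F
    rw [← Equiv.sum_comp i F, ← Fin.sum_univ_eq_sum_range (fun j => F (i (j : Fin (N+1)))) (N+1)]
    exact Finset.sum_congr rfl (fun v _ => by rw [Fin.cast_val_eq_self])
  set g : ℕ → ℝ := fun j => μ (i (j : Fin (N+1))) with hgdef
  set a : ℕ → ℝ := fun j => x (i (j : Fin (N+1))) with hadef
  set S : ℕ → ℝ := fun k => ∑ j ∈ Finset.range (k+1), g j with hSdef
  set T : ℕ → ℝ := fun k => ∑ j ∈ Finset.Icc (k+1) N, g j with hTdef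
  have hmin : ∀ k, k < kstar → S k < T k := by
    intro k hk
    by_contra hcon
    push_neg at hcon
    have := hkstar.2 ⟨by omega, hcon⟩
    omega
  have hSmono : ∀ k l : ℕ, k ≤ l → S k ≤ S l := fun k l hkl =>
    Finset.sum_le_sum_of_subset_of_nonneg (Finset.range_subset_range.mpr (by omega))
      (fun j _ _ => (hg j).le)
  have hTanti : ∀ k l : ℕ, k ≤ l → T l ≤ T k := fun k l hkl =>
    Finset.sum_le_sum_of_subset_of_nonneg (Finset.Icc_subset_Icc (by omega) le_rfl)
      (fun j _ _ => (hg j).le)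
  have htot : ∀ k : ℕ, k ≤ N → ∑ v, μ v = S k + T k := by
    intro k hk
    rw [reindex (fun v => μ v)]
    exact sum_split' g (by omega : k + 1 ≤ N + 1)
  -- second bullet
  have h2 : (∑ k ∈ Finset.range N,
        min (∑ j ∈ Finset.range (k + 1), μ (i (j : Fin (N + 1))))
            (∑ j ∈ Finset.Icc (k + 1) N, μ (i (j : Fin (N + 1))))
          * (x (i (k : Fin (N + 1))) - x (i ((k + 1 : ℕ) : Fin (N + 1)))))
        = ∑ v, μ v * |x v - x (i (kstar : Fin (N + 1)))| := by
    have lhs1 : (∑ k ∈ Finset.range N,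
        min (S k) (T k) * (a k - a (k+1)))
        = ∑ j ∈ Finset.range kstar, g j * (a j - a kstar)
          + ∑ j ∈ Finset.Icc (kstar+1) N, g j * (a kstar - a j) := by
      rw [Finset.range_eq_Ico, ← Finset.sum_Ico_consecutive _ (Nat.zero_le kstar) hkN]
      congr 1
      · rw [← Finset.range_eq_Ico, ← abel1' g a kstar]
        refine Finset.sum_congr rfl (fun k hk => ?_)
        rw [Finset.mem_range] at hk
        rw [min_eq_left (hmin k hk).le]
      · rw [← abel2' g a kstar N hkN]
        refine Finset.sum_congr rfl (fun k hk => ?_)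
        rw [Finset.mem_Ico] at hk
        have : T k ≤ S k := le_trans (hTanti kstar k hk.1) (le_trans hmem (hSmono kstar k hk.1))
        rw [min_eq_right this]
    have rhs1 : (∑ v, μ v * |x v - x (i (kstar : Fin (N + 1)))|)
        = ∑ j ∈ Finset.range kstar, g j * (a j - a kstar)
          + ∑ j ∈ Finset.Icc (kstar+1) N, g j * (a kstar - a j) := by
      rw [reindex (fun v => μ v * |x v - x (i (kstar : Fin (N + 1)))|),
        sum_split' (fun j => g j * |a j - a kstar|) (by omega : kstar + 1 ≤ N + 1)]
      congr 1
      · rw [Finset.sum_range_succ, sub_self, abs_zero, mul_zero, add_zero]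
        refine Finset.sum_congr rfl (fun j hj => ?_)
        rw [Finset.mem_range] at hj
        rw [abs_of_nonneg (sub_nonneg.mpr (ha j kstar (by omega) hkN))]
      · refine Finset.sum_congr rfl (fun j hj => ?_)
        rw [Finset.mem_Icc] at hj
        rw [abs_of_nonpos (sub_nonpos.mpr (ha kstar j (by omega) hj.2)), neg_sub]
    rw [rhs1, ← lhs1]
  -- pointwise median optimality
  have key : ∀ c : ℝ, (∑ v, μ v * |x v - x (i (kstar : Fin (N + 1)))|)
      ≤ ∑ v, μ v * |x v - c| := by
    intro c
    rcases le_total c (a kstar) with hc | hc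
    · -- c ≤ a kstar ; use indicator s v = 1 iff a kstar ≤ x v
      have hs : 0 ≤ ∑ v, μ v * (if a kstar ≤ x v then (1:ℝ) else -1) := by
        rw [reindex (fun v => μ v * (if a kstar ≤ x v then (1:ℝ) else -1))]
        have hlow : ∀ j ∈ Finset.range (N+1),
            (if j < kstar + 1 then g j else -g j)
              ≤ g j * (if a kstar ≤ a j then (1:ℝ) else -1) := by
          intro j hj
          rw [Finset.mem_range] at hj
          by_cases hjk : j < kstar + 1
          · rw [if_pos hjk, if_pos (ha j kstar (by omega) hkN), mul_one]
          · rw [if_neg hjk]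
            by_cases hxc : a kstar ≤ a j
            · rw [if_pos hxc, mul_one]; linarith [(hg j).le]
            · rw [if_neg hxc]; linarith
        have hval : (∑ j ∈ Finset.range (N+1), (if j < kstar + 1 then g j else -g j))
            = S kstar - T kstar := by
          rw [sum_split' (fun j => if j < kstar + 1 then g j else -g j)
            (by omega : kstar + 1 ≤ N + 1)]
          have e1 : ∀ j ∈ Finset.range (kstar+1),
              (if j < kstar + 1 then g j else -g j) = g j := fun j hj =>
            if_pos (Finset.mem_range.mp hj)
          have e2 : ∀ j ∈ Finset.Icc (kstar+1) N,
              (if j < kstar + 1 then g j else -g j) = -g j := fun j hj =>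
            if_neg (by rw [Finset.mem_Icc] at hj; omega)
          rw [Finset.sum_congr rfl e1, Finset.sum_congr rfl e2, Finset.sum_neg_distrib]
          ring
        calc (0:ℝ) ≤ S kstar - T kstar := by linarith
          _ = ∑ j ∈ Finset.range (N+1), (if j < kstar + 1 then g j else -g j) := hval.symm
          _ ≤ _ := Finset.sum_le_sum hlow
      have hterm : ∀ v, μ v * |x v - a kstar|
          + (a kstar - c) * (μ v * (if a kstar ≤ x v then (1:ℝ) else -1))
          ≤ μ v * |x v - c| := by
        intro v
        by_cases h : a kstar ≤ x v
        · rw [if_pos h, abs_of_nonneg (by linarith : (0:ℝ) ≤ x v - a kstar),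
            abs_of_nonneg (by linarith : (0:ℝ) ≤ x v - c)]
          have : μ v * (x v - a kstar) + (a kstar - c) * (μ v * 1) = μ v * (x v - c) := by ring
          linarith
        · push_neg at h
          rw [if_neg (not_le.mpr h), abs_of_nonpos (by linarith : x v - a kstar ≤ 0)]
          have h1 : c - x v ≤ |x v - c| := by rw [abs_sub_comm]; exact le_abs_self _
          have h2 : μ v * (c - x v) ≤ μ v * |x v - c| :=
            mul_le_mul_of_nonneg_left h1 (hμ v).le
          have h3 : μ v * -(x v - a kstar) + (a kstar - c) * (μ v * (-1))
              = μ v * (c - x v) := by ring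
          linarith
      have step : (∑ v, μ v * |x v - a kstar|)
          + (a kstar - c) * ∑ v, μ v * (if a kstar ≤ x v then (1:ℝ) else -1)
          ≤ ∑ v, μ v * |x v - c| := by
        rw [Finset.mul_sum, ← Finset.sum_add_distrib]
        exact Finset.sum_le_sum (fun v _ => hterm v)
      have hnn : 0 ≤ (a kstar - c) * ∑ v, μ v * (if a kstar ≤ x v then (1:ℝ) else -1) :=
        mul_nonneg (by linarith) hs
      linarith
    · -- a kstar ≤ c ; use indicator s v = 1 iff x v ≤ a kstar
      have h0 : ∑ j ∈ Finset.range kstar, g j ≤ ∑ j ∈ Finset.Icc kstar N, g j := by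
        rcases Nat.eq_zero_or_pos kstar with h | h
        · subst h
          simp only [Finset.range_zero, Finset.sum_empty]
          exact Finset.sum_nonneg (fun j _ => (hg j).le)
        · obtain ⟨m, rfl⟩ : ∃ m, kstar = m + 1 := ⟨kstar - 1, by omega⟩
          exact (hmin m (by omega)).le
      have hs : 0 ≤ ∑ v, μ v * (if x v ≤ a kstar then (1:ℝ) else -1) := by
        rw [reindex (fun v => μ v * (if x v ≤ a kstar then (1:ℝ) else -1))]
        have hlow : ∀ j ∈ Finset.range (N+1),
            (if j < kstar then -g j else g j)
              ≤ g j * (if a j ≤ a kstar then (1:ℝ) else -1) := by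
          intro j hj
          rw [Finset.mem_range] at hj
          by_cases hjk : j < kstar
          · rw [if_pos hjk]
            by_cases hxc : a j ≤ a kstar
            · rw [if_pos hxc, mul_one]; linarith [(hg j).le]
            · rw [if_neg hxc]; linarith
          · rw [if_neg hjk, if_pos (ha kstar j (by omega) (by omega)), mul_one]
        have hval : (∑ j ∈ Finset.range (N+1), (if j < kstar then -g j else g j))
            = (∑ j ∈ Finset.Icc kstar N, g j) - ∑ j ∈ Finset.range kstar, g j := by
          rw [sum_split' (fun j => if j < kstar then -g j else g j)
            (by omega : kstar ≤ N + 1)]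
          have e1 : ∀ j ∈ Finset.range kstar,
              (if j < kstar then -g j else g j) = -g j := fun j hj =>
            if_pos (Finset.mem_range.mp hj)
          have e2 : ∀ j ∈ Finset.Icc kstar N,
              (if j < kstar then -g j else g j) = g j := fun j hj =>
            if_neg (by rw [Finset.mem_Icc] at hj; omega)
          rw [Finset.sum_congr rfl e1, Finset.sum_congr rfl e2, Finset.sum_neg_distrib]
          ring
        calc (0:ℝ) ≤ (∑ j ∈ Finset.Icc kstar N, g j) - ∑ j ∈ Finset.range kstar, g j := by
              linarith
          _ = ∑ j ∈ Finset.range (N+1), (if j < kstar then -g j else g j) := hval.symm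
          _ ≤ _ := Finset.sum_le_sum hlow
      have hterm : ∀ v, μ v * |x v - a kstar|
          + (c - a kstar) * (μ v * (if x v ≤ a kstar then (1:ℝ) else -1))
          ≤ μ v * |x v - c| := by
        intro v
        by_cases h : x v ≤ a kstar
        · rw [if_pos h, abs_of_nonpos (by linarith : x v - a kstar ≤ 0)]
          have h1 : c - x v ≤ |x v - c| := by rw [abs_sub_comm]; exact le_abs_self _
          have h2 : μ v * (c - x v) ≤ μ v * |x v - c| :=
            mul_le_mul_of_nonneg_left h1 (hμ v).le
          have h3 : μ v * -(x v - a kstar) + (c - a kstar) * (μ v * 1)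
              = μ v * (c - x v) := by ring
          linarith
        · push_neg at h
          rw [if_neg (not_le.mpr h), abs_of_nonneg (by linarith : (0:ℝ) ≤ x v - a kstar)]
          have h1 : x v - c ≤ |x v - c| := le_abs_self _
          have h2 : μ v * (x v - c) ≤ μ v * |x v - c| :=
            mul_le_mul_of_nonneg_left h1 (hμ v).le
          have h3 : μ v * (x v - a kstar) + (c - a kstar) * (μ v * (-1))
              = μ v * (x v - c) := by ring
          linarith
      have step : (∑ v, μ v * |x v - a kstar|)
          + (c - a kstar) * ∑ v, μ v * (if x v ≤ a kstar then (1:ℝ) else -1)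
          ≤ ∑ v, μ v * |x v - c| := by
        rw [Finset.mul_sum, ← Finset.sum_add_distrib]
        exact Finset.sum_le_sum (fun v _ => hterm v)
      have hnn : 0 ≤ (c - a kstar) * ∑ v, μ v * (if x v ≤ a kstar then (1:ℝ) else -1) :=
        mul_nonneg (by linarith) hs
      linarith
  -- third bullet
  have h3 : (∑ v, μ v * |x v - x (i (kstar : Fin (N + 1)))|)
      = ⨅ c : ℝ, ∑ v, μ v * |x v - c| := by
    refine le_antisymm (le_ciInf key) (ciInf_le ⟨0, ?_⟩ (x (i (kstar : Fin (N + 1)))))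
    rintro y ⟨c, rfl⟩
    exact Finset.sum_nonneg (fun v _ => mul_nonneg (hμ v).le (abs_nonneg _))
  -- first bullet
  have hInf : (⨅ v, x v) = a N := by
    refine le_antisymm (ciInf_le (Set.Finite.bddBelow (Set.finite_range x)) _) (le_ciInf fun v => ?_)
    have hle : i.symm v ≤ ((N : ℕ) : Fin (N+1)) := by
      rw [Fin.le_def, Fin.val_cast_of_lt (by omega)]
      exact Nat.lt_succ_iff.mp (i.symm v).isLt
    have := hsort (i.symm v) ((N : ℕ) : Fin (N+1)) hle
    rwa [Equiv.apply_symm_apply] at this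
  have hSup : (⨆ v, x v) = a 0 := by
    refine le_antisymm (ciSup_le fun v => ?_) (le_ciSup (Set.Finite.bddAbove (Set.finite_range x)) _)
    have hle : ((0 : ℕ) : Fin (N+1)) ≤ i.symm v := by
      rw [Fin.le_def, Fin.val_cast_of_lt (by omega)]
      exact Nat.zero_le _
    have := hsort ((0 : ℕ) : Fin (N+1)) (i.symm v) hle
    rwa [Equiv.apply_symm_apply] at this
  have hφ : ∀ k, k < N → ∀ t ∈ Set.Ioo (a (k+1)) (a k),
      (fun S : Finset (Fin (N + 1)) => min (∑ v ∈ S, μ v) (∑ v ∈ Sᶜ, μ v))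
        (Finset.univ.filter fun v => t < x v) = min (S k) (T k) := by
    intro k hk t ht
    obtain ⟨ht1, ht2⟩ := ht
    have hfil : ∑ v ∈ Finset.univ.filter (fun v => t < x v), μ v = S k := by
      rw [Finset.sum_filter, reindex (fun v => if t < x v then μ v else 0),
        sum_split' (fun j => if t < a j then g j else 0) (by omega : k + 1 ≤ N + 1)]
      have e1 : ∀ j ∈ Finset.range (k+1), (if t < a j then g j else 0) = g j := by
        intro j hj
        rw [Finset.mem_range] at hj
        exact if_pos (lt_of_lt_of_le ht2 (ha j k (by omega) (by omega)))
      have e2 : ∀ j ∈ Finset.Icc (k+1) N, (if t < a j then g j else 0) = 0 := by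
        intro j hj
        rw [Finset.mem_Icc] at hj
        exact if_neg (not_lt.mpr (le_of_lt (lt_of_le_of_lt (ha (k+1) j hj.1 hj.2) ht1)))
      rw [Finset.sum_congr rfl e1, Finset.sum_congr rfl e2, Finset.sum_const_zero, add_zero]
    have hcompl : ∑ v ∈ (Finset.univ.filter (fun v => t < x v))ᶜ, μ v = T k := by
      have hadd := Finset.sum_add_sum_compl (Finset.univ.filter (fun v => t < x v)) μ
      have := htot k (by omega)
      rw [hfil] at hadd
      linarith
    simp only []
    rw [hfil, hcompl]
  have hII : ∀ k, k < N → IntervalIntegrable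
      (fun t => (fun S : Finset (Fin (N + 1)) => min (∑ v ∈ S, μ v) (∑ v ∈ Sᶜ, μ v))
        (Finset.univ.filter fun v => t < x v)) MeasureTheory.volume
      (a (N - k)) (a (N - (k+1))) := by
    intro k hk
    have hm1 : N - k = (N - 1 - k) + 1 := by omega
    have hm2 : N - (k+1) = N - 1 - k := by omega
    rw [hm1, hm2]
    exact II_const_on _ _ _ (min (S (N-1-k)) (T (N-1-k)))
      (ha (N-1-k) (N-1-k+1) (by omega) (by omega)) (hφ (N-1-k) (by omega))
  have h1 : lovasz (fun S : Finset (Fin (N + 1)) => min (∑ v ∈ S, μ v) (∑ v ∈ Sᶜ, μ v)) x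
      = ∑ k ∈ Finset.range N,
        min (∑ j ∈ Finset.range (k + 1), μ (i (j : Fin (N + 1))))
            (∑ j ∈ Finset.Icc (k + 1) N, μ (i (j : Fin (N + 1))))
          * (x (i (k : Fin (N + 1))) - x (i ((k + 1 : ℕ) : Fin (N + 1)))) := by
    have hsum := intervalIntegral.sum_integral_adjacent_intervals
      (a := fun k => a (N - k)) (n := N) (μ := MeasureTheory.volume) hII
    simp only [Nat.sub_self, Nat.sub_zero] at hsum
    rw [lovasz, hInf, hSup, ← hsum,
      ← Finset.sum_range_reflect (fun k => min (S k) (T k) * (a k - a (k+1))) N]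
    refine Finset.sum_congr rfl (fun k hk => ?_)
    rw [Finset.mem_range] at hk
    have hm1 : N - k = (N - 1 - k) + 1 := by omega
    have hm2 : N - (k+1) = N - 1 - k := by omega
    rw [hm1, hm2, integral_const_on _ _ _ (min (S (N-1-k)) (T (N-1-k)))
      (ha (N-1-k) (N-1-k+1) (by omega) (by omega)) (hφ (N-1-k) (by omega))]
  exact ⟨h1.trans (h2.trans h3), h2, h3⟩
end
end
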